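/- arXiv:1105.0557 — 6 statements merged into one kernel-verified Lean document; each statement's English description precedes it below -/
import Mathlib

section
/- Let (X,d) be a locally compact metric space and let {g_i} be a net in Iso(X) such that {g_i x} is a Cauchy net in X for some x ∈ X. Then there exists a point y ∈ X such that g_i x → y. -/
open Filter Topology

/-- If `(X,d)` is a locally compact metric space and `(g_i)` is a net in `Iso(X)` such
that `(g_i x)` is a Cauchy net in `X` for some `x ∈ X`, then there exists `y ∈ X` with
`g_i x → y`. -/
theorem exists_limit_of_cauchy_net_of_locallyCompact
    {X : Type*} [MetricSpace X] [LocallyCompactSpace X]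
    {ι : Type*} [Nonempty ι] [Preorder ι] [IsDirected ι (· ≤ ·)]
    (g : ι → X ≃ᵢ X) (x : X)
    (hx : Cauchy (Filter.map (fun i => g i x) Filter.atTop)) :
    ∃ y : X, Filter.Tendsto (fun i => g i x) Filter.atTop (𝓝 y) := by
  -- compact neighborhood of x
  obtain ⟨K, hK, hKnhds⟩ := exists_compact_mem_nhds x
  obtain ⟨ε, hε, hball⟩ := Metric.mem_nhds_iff.mp hKnhds
  -- Cauchy: eventually pairwise distances < ε
  obtain ⟨hne, hsmall⟩ := Metric.cauchy_iff.mp hx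
  obtain ⟨t, ht, htd⟩ := hsmall ε hε
  rw [Filter.mem_map, Filter.mem_atTop_sets] at ht
  obtain ⟨i₀, hi₀⟩ := ht
  -- pulled-back net
  set f : ι → X := fun i => (g i₀).symm (g i x) with hf
  have hF' : Cauchy (Filter.map f atTop) := by
    have := hx.map ((g i₀).symm.isometry.uniformContinuous)
    rwa [Filter.map_map] at this
  have hle : Filter.map f atTop ≤ 𝓟 K := by
    rw [Filter.le_principal_iff, Filter.mem_map, Filter.mem_atTop_sets]
    refine ⟨i₀, fun i hi => ?_⟩
    apply hball
    have : dist (f i) x < ε := by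
      have h1 : dist ((g i₀).symm (g i x)) ((g i₀).symm (g i₀ x)) < ε := by
        rw [(g i₀).symm.dist_eq]
        exact htd _ (hi₀ i hi) _ (hi₀ i₀ le_rfl)
      simpa [hf] using h1
    simpa [Metric.mem_ball] using this
  haveI := hF'.1
  obtain ⟨z, hzK, hz⟩ := hK hle
  have hconv : Filter.map f atTop ≤ 𝓝 z := le_nhds_of_cauchy_adhp hF' hz
  refine ⟨g i₀ z, ?_⟩
  have : Filter.Tendsto (fun i => g i₀ (f i)) atTop (𝓝 (g i₀ z)) :=
    ((g i₀).continuous.tendsto z).comp hconv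
  simpa [hf, (g i₀).apply_symm_apply] using this
end

section
/- Let (X,d) be a locally compact metric space. The natural evaluation action (Iso(X),X) is proper if and only if it is Cauchy-indivisible. -/
open Filter Topology Set UniformSpace

noncomputable section

/-- The topology of pointwise convergence on the group of surjective isometries of `X`. -/
instance isoPointwiseTopology (X : Type*) [MetricSpace X] : TopologicalSpace (X ≃ᵢ X) :=
  TopologicalSpace.induced (fun g => (g : X → X)) Pi.topologicalSpace

/-- A net `g` diverges (`g_i → ∞`), i.e. it has no convergent subnet; equivalently,
no cluster point. -/
def DivergentNet {G : Type*} [TopologicalSpace G] {ι : Type*} [Preorder ι]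
    (g : ι → G) : Prop :=
  ∀ h : G, ¬ MapClusterPt h atTop g

/-- A sequence `g` diverges (`g_n → ∞`), i.e. it has no convergent subsequence. -/
def DivergentSeq {G : Type*} [TopologicalSpace G] (g : ℕ → G) : Prop :=
  ∀ φ : ℕ → ℕ, StrictMono φ → ∀ h : G, ¬ Tendsto (g ∘ φ) atTop (𝓝 h)

/-- The natural evaluation action of `Iso(X)` on `X` is Cauchy-indivisible: whenever a
net `g` in `Iso(X)` has no convergent subnet and `(g_i x)` is a Cauchy net for some
`x`, then `(g_i y)` is a Cauchy net for every `y`. -/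
def IsoCauchyIndivisible (X : Type*) [MetricSpace X] : Prop :=
  ∀ (ι : Type*) [Nonempty ι] [Preorder ι] [IsDirected ι (· ≤ ·)],
    ∀ g : ι → X ≃ᵢ X, DivergentNet g →
      (∃ x : X, Cauchy (map (fun i => g i x) atTop)) →
      ∀ y : X, Cauchy (map (fun i => g i y) atTop)

/-- Properness of the isometric evaluation action, expressed through emptiness of all
limit sets `L(x)`: no net in `Iso(X)` without convergent subnet has `(g_i x)`
converging in `X`. -/
def IsoProperLimits (X : Type*) [MetricSpace X] : Prop :=
  ∀ (ι : Type*) [Nonempty ι] [Preorder ι] [IsDirected ι (· ≤ ·)],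
    ∀ g : ι → X ≃ᵢ X, DivergentNet g →
      ∀ x y : X, ¬ Tendsto (fun i => g i x) atTop (𝓝 y)

/-- The canonical lift `ĝ` of an isometry of `X` to the completion `X̂`. -/
def hatIso {X : Type*} [MetricSpace X] (g : X ≃ᵢ X) : Completion X → Completion X :=
  Completion.map (g : X → X)

/-- The lifted group `{ĝ : g ∈ Iso(X)}` inside the selfmaps of `X̂`. -/
def hatIsoSet (X : Type*) [MetricSpace X] : Set (Completion X → Completion X) :=
  Set.range (hatIso (X := X))

/-- The Ellis semigroup `E`: the closure of the lifted group `{ĝ}` in the topology of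
pointwise convergence on selfmaps of `X̂`. -/
def Ellis (X : Type*) [MetricSpace X] : Set (Completion X → Completion X) :=
  closure (hatIsoSet X)

/-- The set `H` of pointwise limits on `X̂` of divergent sequences of lifted isometries. -/
def Hset (X : Type*) [MetricSpace X] : Set (Completion X → Completion X) :=
  { h | Continuous h ∧ ∃ g : ℕ → X ≃ᵢ X, DivergentSeq g ∧
      Tendsto (fun n => hatIso (g n)) atTop (𝓝 h) }

/-- The set `X_l ⊆ X̂` of limit points of the action `(Iso(X), X)` in the completion. -/
def Xl (X : Type*) [MetricSpace X] : Set (Completion X) :=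
  { y | ∃ (g : ℕ → X ≃ᵢ X) (x : X), DivergentSeq g ∧
      CauchySeq (fun n => g n x) ∧
      Tendsto (fun n => ((g n x : X) : Completion X)) atTop (𝓝 y) }

/-- The set `X_p ⊆ X̂` of special limit points of the action `(Iso(X), X)`. -/
def Xp (X : Type*) [MetricSpace X] : Set (Completion X) :=
  { y | ∃ (g : ℕ → X ≃ᵢ X) (x : X), DivergentSeq g ∧
      CauchySeq (fun n => g n x) ∧ CauchySeq (fun n => (g n).symm x) ∧
      Tendsto (fun n => ((g n x : X) : Completion X)) atTop (𝓝 y) }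

/-- `X ∪ X_l`, with `X` identified with its image in the completion `X̂`. -/
def XcupXl (X : Type*) [MetricSpace X] : Set (Completion X) :=
  Set.range ((↑) : X → Completion X) ∪ Xl X

/-- `X ∪ X_p`, with `X` identified with its image in the completion `X̂`. -/
def XcupXp (X : Type*) [MetricSpace X] : Set (Completion X) :=
  Set.range ((↑) : X → Completion X) ∪ Xp X

/-- The Ellis semigroup is a group: every element has a two-sided inverse in `E`
(under composition). -/
def EllisIsGroup (X : Type*) [MetricSpace X] : Prop :=
  ∀ f ∈ Ellis X, ∃ g ∈ Ellis X, f ∘ g = id ∧ g ∘ f = id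

/-! ### Auxiliary lemmas -/

section Aux

universe u v

variable {X : Type u} [MetricSpace X]

private lemma isoCoe_isInducing :
    IsInducing (fun g : X ≃ᵢ X => (g : X → X)) := ⟨rfl⟩

private lemma continuous_isoEval (w : X) : Continuous (fun g : X ≃ᵢ X => g w) :=
  (continuous_apply w).comp isoCoe_isInducing.continuous

private lemma tendsto_iso_iff {ι : Type*} {F : Filter ι} {g : ι → X ≃ᵢ X} {h : X ≃ᵢ X} :
    Tendsto g F (𝓝 h) ↔ ∀ w : X, Tendsto (fun i => g i w) F (𝓝 (h w)) := by
  rw [isoCoe_isInducing.tendsto_nhds_iff]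
  exact tendsto_pi_nhds

/-- If the orbit filter of a point under a family of isometries is Cauchy, then
(by local compactness and surjectivity of the isometries) it is eventually contained
in a compact set. -/
private lemma exists_compact_orbit [LocallyCompactSpace X] {α : Type*} {l : Filter α}
    {u : α → X ≃ᵢ X} {x : X} (h : Cauchy (map (fun a => u a x) l)) :
    ∃ C : Set X, IsCompact C ∧ ∀ᶠ a in l, u a x ∈ C := by
  haveI : l.NeBot := by
    have := h.1
    exact map_neBot_iff _ |>.mp this
  obtain ⟨K, hKc, hKn⟩ := exists_compact_mem_nhds x
  obtain ⟨r, hr, hrK⟩ := Metric.nhds_basis_closedBall.mem_iff.mp hKn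
  have hball : IsCompact (Metric.closedBall x r) :=
    hKc.of_isClosed_subset Metric.isClosed_closedBall hrK
  obtain ⟨-, hP⟩ := Metric.cauchy_iff.mp h
  obtain ⟨t, htm, htd⟩ := hP r hr
  rw [mem_map] at htm
  obtain ⟨a₀, ha₀⟩ := Filter.nonempty_of_mem htm
  refine ⟨u a₀ '' Metric.closedBall x r, hball.image (u a₀).continuous, ?_⟩
  filter_upwards [htm] with a ha
  refine ⟨(u a₀).symm (u a x), ?_, (u a₀).apply_symm_apply _⟩
  rw [Metric.mem_closedBall]
  have hd : dist ((u a₀).symm (u a x)) ((u a₀).symm (u a₀ x)) = dist (u a x) (u a₀ x) :=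
    (u a₀).symm.dist_eq _ _
  rw [(u a₀).symm_apply_apply] at hd
  rw [hd]
  exact le_of_lt (htd _ ha _ ha₀)

/-- The closure of an orbit set `{g w : g ∈ T}` is a complete subset of `X`,
when `X` is locally compact (trap argument using surjectivity of isometries). -/
private lemma isComplete_closure_orbit [LocallyCompactSpace X]
    (T : Set (X ≃ᵢ X)) (w : X) :
    IsComplete (closure ((fun g : X ≃ᵢ X => g w) '' T)) := by
  set E := (fun g : X ≃ᵢ X => g w) '' T with hE
  intro f hf hfE
  haveI : f.NeBot := hf.1
  obtain ⟨K, hKc, hKn⟩ := exists_compact_mem_nhds w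
  obtain ⟨r, hr, hrK⟩ := Metric.nhds_basis_closedBall.mem_iff.mp hKn
  have hball : IsCompact (Metric.closedBall w r) :=
    hKc.of_isClosed_subset Metric.isClosed_closedBall hrK
  obtain ⟨-, hP⟩ := Metric.cauchy_iff.mp hf
  obtain ⟨t, htm, htd⟩ := hP (r / 4) (by positivity)
  have hcl : closure E ∈ f := le_principal_iff.mp hfE
  obtain ⟨v, hvt, hvE⟩ := Filter.nonempty_of_mem (inter_mem htm hcl)
  obtain ⟨p, hpE, hpv⟩ := Metric.mem_closure_iff.mp hvE (r / 4) (by positivity)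
  obtain ⟨g₀, hg₀T, hg₀⟩ := hpE
  have hsub : t ⊆ g₀ '' Metric.closedBall w r := by
    intro z hz
    refine ⟨g₀.symm z, ?_, g₀.apply_symm_apply _⟩
    rw [Metric.mem_closedBall]
    have h1 : dist (g₀.symm z) (g₀.symm (g₀ w)) = dist z (g₀ w) := g₀.symm.dist_eq _ _
    rw [g₀.symm_apply_apply] at h1
    have hg₀' : g₀ w = p := hg₀
    rw [h1, hg₀']
    calc dist z p ≤ dist z v + dist v p := dist_triangle _ _ _
      _ ≤ r / 4 + r / 4 := add_le_add (le_of_lt (htd _ hz _ hvt)) hpv.le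
      _ ≤ r := by linarith
  have hKf : g₀ '' Metric.closedBall w r ∈ f := mem_of_superset htm hsub
  obtain ⟨q, -, hq⟩ := (hball.image g₀.continuous).exists_clusterPt (le_principal_iff.mpr hKf)
  have hle : f ≤ 𝓝 q := le_nhds_of_cauchy_adhp hf hq
  refine ⟨q, ?_, hle⟩
  have hcp : ClusterPt q (𝓟 (closure E)) := by
    refine ClusterPt.mono ?_ hfE
    exact ClusterPt.of_le_nhds hle
  have := mem_closure_iff_clusterPt.mpr hcp
  rwa [closure_closure] at this

/-- Orbits of "bounded" sets of isometries are totally bounded, assuming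
Cauchy-indivisibility. -/
private lemma totallyBounded_orbit [LocallyCompactSpace X]
    (hCI : IsoCauchyIndivisible.{u, v} X) {x y₀ : X} {r : ℝ}
    (hball : IsCompact (Metric.closedBall y₀ r)) {T : Set (X ≃ᵢ X)}
    (hTsub : ∀ g ∈ T, dist (g x) y₀ ≤ r) (w : X) :
    TotallyBounded ((fun g : X ≃ᵢ X => g w) '' T) := by
  classical
  set E := (fun g : X ≃ᵢ X => g w) '' T with hEdef
  rw [Metric.totallyBounded_iff]
  by_contra hc
  push_neg at hc
  obtain ⟨ε, hε, hcov⟩ := hc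
  -- from every finite set, pick an isometry in `T` whose value at `w` is `ε`-far from it
  have key : ∀ s : Finset X, ∃ g : X ≃ᵢ X, g ∈ T ∧ ∀ p ∈ s, ε ≤ dist (g w) p := by
    intro s
    obtain ⟨z, hzE, hz⟩ := not_subset.mp (hcov ↑s s.finite_toSet)
    obtain ⟨g, hgT, hgz⟩ := hzE
    subst hgz
    refine ⟨g, hgT, fun p hp => ?_⟩
    by_contra hlt
    push_neg at hlt
    exact hz (Set.mem_biUnion hp (Metric.mem_ball.mpr hlt))
  choose gf hgfT hgfsep using key
  -- build an `ε`-separated sequence greedily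
  let Fh : ℕ → Finset X := fun n => Nat.rec (∅ : Finset X) (fun _ Fm => insert (gf Fm w) Fm) n
  let u : ℕ → X ≃ᵢ X := fun n => gf (Fh n)
  have hFh_succ : ∀ n, Fh (n + 1) = insert (u n w) (Fh n) := fun n => rfl
  have hFh_mono : ∀ m n, m ≤ n → Fh m ⊆ Fh n := by
    intro m n h
    induction n with
    | zero =>
      have : m = 0 := Nat.le_zero.mp h
      subst this; exact Finset.Subset.refl _
    | succ k ih =>
      rcases Nat.lt_or_ge m (k + 1) with hlt | hge
      · refine (ih (Nat.lt_succ_iff.mp hlt)).trans ?_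
        rw [hFh_succ]
        exact Finset.subset_insert _ _
      · have : m = k + 1 := le_antisymm h hge
        subst this; exact Finset.Subset.refl _
  have hmem : ∀ m n, m < n → u m w ∈ Fh n := by
    intro m n h
    refine hFh_mono (m + 1) n h ?_
    rw [hFh_succ]
    exact Finset.mem_insert_self _ _
  have hsep : ∀ {m n : ℕ}, m < n → ε ≤ dist (u n w) (u m w) := by
    intro m n h
    exact hgfsep (Fh n) (u m w) (hmem m n h)
  have hsep' : ∀ {m n : ℕ}, m ≠ n → ε ≤ dist (u n w) (u m w) := by
    intro m n h
    rcases h.lt_or_gt with h' | h'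
    · exact hsep h'
    · rw [dist_comm]; exact hsep h'
  -- the x-orbit lies in a compact set; extract a convergent subsequence
  have hx : ∀ n, u n x ∈ Metric.closedBall y₀ r := fun n =>
    Metric.mem_closedBall.mpr (hTsub _ (hgfT (Fh n)))
  obtain ⟨p, -, φ, hφ, hφt⟩ := hball.tendsto_subseq hx
  -- turn the subsequence into a net indexed by `ULift ℕ` (for universe reasons)
  haveI : Nonempty (ULift.{v} ℕ) := ⟨⟨0⟩⟩
  let vseq : ULift.{v} ℕ → X ≃ᵢ X := fun i => u (φ i.down)
  have hdown : Tendsto (fun i : ULift.{v} ℕ => i.down) atTop atTop :=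
    tendsto_atTop_atTop.mpr fun b => ⟨⟨b⟩, fun a ha => ha⟩
  have hxa : Tendsto (fun i : ULift.{v} ℕ => vseq i x) atTop (𝓝 p) := hφt.comp hdown
  have hxc : Cauchy (map (fun i : ULift.{v} ℕ => vseq i x) atTop) := hxa.cauchy_map
  -- in either case we find two distinct indices with `w`-values close together
  have pair : ∃ i j : ℕ, i ≠ j ∧ dist (u (φ i) w) (u (φ j) w) < ε := by
    by_cases hdiv : DivergentNet vseq
    · have hcw := hCI (ULift.{v} ℕ) vseq hdiv ⟨x, hxc⟩ w
      obtain ⟨-, hQ⟩ := Metric.cauchy_iff.mp hcw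
      obtain ⟨t, htm, htd⟩ := hQ ε hε
      rw [mem_map, mem_atTop_sets] at htm
      obtain ⟨a, ha⟩ := htm
      refine ⟨a.down, a.down + 1, Nat.ne_of_lt (Nat.lt_succ_self _), ?_⟩
      have h1 := ha a le_rfl
      have h2 : (⟨a.down + 1⟩ : ULift.{v} ℕ) ∈ (fun i : ULift.{v} ℕ => vseq i w) ⁻¹' t :=
        ha ⟨a.down + 1⟩ (Nat.le_succ _)
      exact htd _ h1 _ h2
    · simp only [DivergentNet, not_forall, not_not] at hdiv
      obtain ⟨k, hk⟩ := hdiv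
      have hs : {g : X ≃ᵢ X | dist (g w) (k w) < ε / 2} ∈ 𝓝 k := by
        have hopen : IsOpen {g : X ≃ᵢ X | dist (g w) (k w) < ε / 2} :=
          isOpen_lt ((continuous_isoEval w).dist continuous_const) continuous_const
        refine hopen.mem_nhds ?_
        simp only [mem_setOf_eq, dist_self]
        positivity
      have hfreq := mapClusterPt_iff_frequently.mp hk _ hs
      rw [frequently_atTop] at hfreq
      obtain ⟨a, -, ha⟩ := hfreq ⟨0⟩
      obtain ⟨b, hab, hb⟩ := hfreq ⟨a.down + 1⟩
      refine ⟨b.down, a.down, ?_, ?_⟩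
      · have : a.down + 1 ≤ b.down := hab
        omega
      · calc dist (u (φ b.down) w) (u (φ a.down) w)
            ≤ dist (vseq b w) (k w) + dist (k w) (vseq a w) := dist_triangle _ _ _
          _ < ε / 2 + ε / 2 := add_lt_add hb (by rw [dist_comm]; exact ha)
          _ = ε := by ring
  obtain ⟨i, j, hij, hlt⟩ := pair
  exact absurd hlt (not_lt.mpr (hsep' fun hh => hij (hφ.injective hh).symm))

/-- Under Cauchy-indivisibility and local compactness, any ultrafilter on `Iso(X)`
with a convergent orbit converges pointwise (on all of `X`) to a map `X → X`. -/
private lemma exists_pointwise_limit [LocallyCompactSpace X]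
    (hCI : IsoCauchyIndivisible.{u, v} X) (𝒢 : Ultrafilter (X ≃ᵢ X)) {x y₀ : X}
    (horb : Tendsto (fun g : X ≃ᵢ X => g x) 𝒢 (𝓝 y₀)) :
    ∃ F : X → X, ∀ w : X, Tendsto (fun g : X ≃ᵢ X => g w) 𝒢 (𝓝 (F w)) := by
  obtain ⟨K, hKc, hKn⟩ := exists_compact_mem_nhds y₀
  obtain ⟨r, hr, hrK⟩ := Metric.nhds_basis_closedBall.mem_iff.mp hKn
  have hball : IsCompact (Metric.closedBall y₀ r) :=
    hKc.of_isClosed_subset Metric.isClosed_closedBall hrK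
  set T : Set (X ≃ᵢ X) := (fun g : X ≃ᵢ X => g x) ⁻¹' Metric.closedBall y₀ r with hT
  have hT𝒢 : T ∈ (𝒢 : Filter (X ≃ᵢ X)) := horb (Metric.closedBall_mem_nhds y₀ hr)
  have hTsub : ∀ g ∈ T, dist (g x) y₀ ≤ r := fun g hg => Metric.mem_closedBall.mp hg
  set C : X → Set X := fun w => closure ((fun g : X ≃ᵢ X => g w) '' T) with hC
  have hCc : ∀ w, IsCompact (C w) := fun w =>
    isCompact_iff_totallyBounded_isComplete.mpr
      ⟨(totallyBounded_orbit hCI hball hTsub w).closure, isComplete_closure_orbit T w⟩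
  have hP : IsCompact (univ.pi C) := isCompact_univ_pi hCc
  have hmem : univ.pi C ∈ (Ultrafilter.map (fun g : X ≃ᵢ X => (g : X → X)) 𝒢 :
      Filter (X → X)) := by
    rw [Ultrafilter.coe_map, mem_map]
    refine mem_of_superset hT𝒢 fun g hg => ?_
    intro w _
    exact subset_closure ⟨g, hg, rfl⟩
  obtain ⟨F, -, hFle⟩ := hP.ultrafilter_le_nhds _ (le_principal_iff.mpr hmem)
  refine ⟨F, fun w => ?_⟩
  have h1 : Tendsto (fun f : X → X => f w)
      (Ultrafilter.map (fun g : X ≃ᵢ X => (g : X → X)) 𝒢 : Filter (X → X)) (𝓝 (F w)) :=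
    ((continuous_apply w).tendsto F).mono_left hFle
  rw [Ultrafilter.coe_map, tendsto_map'_iff] at h1
  exact h1

end Aux

/-- On a locally compact metric space, the evaluation action of `Iso(X)` on `X` is
proper (in Bourbaki's sense) if and only if it is Cauchy-indivisible. -/
theorem isoProper_iff_isoCauchyIndivisible
    (X : Type*) [MetricSpace X] [LocallyCompactSpace X] :
    IsProperMap (fun p : (X ≃ᵢ X) × X => (p.2, p.1 p.2)) ↔ IsoCauchyIndivisible X := by
  constructor
  · -- properness implies Cauchy-indivisibility (vacuously: a divergent net cannot
    -- have a Cauchy orbit)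
    intro hp ι _ _ _ g hdiv hex y
    exfalso
    obtain ⟨x, hx⟩ := hex
    haveI hne : (atTop : Filter ι).NeBot := atTop_neBot_iff.mpr ⟨‹_›, ‹_›⟩
    obtain ⟨C, hCc, hCev⟩ := exists_compact_orbit hx
    have hpre : IsCompact ((fun p : (X ≃ᵢ X) × X => (p.2, p.1 p.2)) ⁻¹' ({x} ×ˢ C)) :=
      hp.isCompact_preimage (isCompact_singleton.prod hCc)
    have hmem : ((fun p : (X ≃ᵢ X) × X => (p.2, p.1 p.2)) ⁻¹' ({x} ×ˢ C)) ∈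
        map (fun i => (g i, x)) atTop := by
      rw [mem_map]
      filter_upwards [hCev] with i hi
      exact ⟨rfl, hi⟩
    haveI : (map (fun i => (g i, x)) atTop).NeBot := map_neBot
    obtain ⟨q, -, hq⟩ := hpre.exists_clusterPt (le_principal_iff.mpr hmem)
    refine hdiv q.1 ?_
    have hcl : ClusterPt q.1 (map Prod.fst (map (fun i => (g i, x)) atTop)) :=
      hq.map continuousAt_fst tendsto_map
    rwa [map_map] at hcl
  · -- Cauchy-indivisibility implies properness
    intro hCI
    rw [isProperMap_iff_ultrafilter]
    constructor
    · -- continuity of the evaluation action (equicontinuity of isometries)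
      apply continuous_snd.prodMk
      rw [continuous_iff_continuousAt]
      rintro ⟨g₀, x₀⟩
      rw [ContinuousAt, tendsto_iff_dist_tendsto_zero]
      have h1 : Tendsto (fun p : (X ≃ᵢ X) × X => p.2) (𝓝 (g₀, x₀)) (𝓝 x₀) := continuousAt_snd
      have h2 : Tendsto (fun p : (X ≃ᵢ X) × X => p.1 x₀) (𝓝 (g₀, x₀)) (𝓝 (g₀ x₀)) :=
        ((continuous_isoEval x₀).comp continuous_fst).continuousAt
      have hb : Tendsto (fun p : (X ≃ᵢ X) × X => dist p.2 x₀ + dist (p.1 x₀) (g₀ x₀))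
          (𝓝 (g₀, x₀)) (𝓝 0) := by
        have := (h1.dist (tendsto_const_nhds (x := x₀))).add
          (h2.dist (tendsto_const_nhds (x := g₀ x₀)))
        simpa using this
      refine squeeze_zero (fun p => dist_nonneg) (fun p => ?_) hb
      calc dist (p.1 p.2) (g₀ x₀) ≤ dist (p.1 p.2) (p.1 x₀) + dist (p.1 x₀) (g₀ x₀) :=
            dist_triangle _ _ _
        _ = dist p.2 x₀ + dist (p.1 x₀) (g₀ x₀) := by rw [(p.1).dist_eq]
    · rintro 𝒰 q hq
      set 𝒢 : Ultrafilter (X ≃ᵢ X) := 𝒰.map Prod.fst with h𝒢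
      have hq1 : Tendsto (fun p : (X ≃ᵢ X) × X => p.2) 𝒰 (𝓝 q.1) :=
        (continuous_fst.tendsto q).comp hq
      have hq2 : Tendsto (fun p : (X ≃ᵢ X) × X => p.1 p.2) 𝒰 (𝓝 q.2) :=
        (continuous_snd.tendsto q).comp hq
      have horb0 : Tendsto (fun p : (X ≃ᵢ X) × X => p.1 q.1) 𝒰 (𝓝 q.2) := by
        rw [tendsto_iff_dist_tendsto_zero]
        have hb : Tendsto (fun p : (X ≃ᵢ X) × X => dist p.2 q.1 + dist (p.1 p.2) q.2)
            𝒰 (𝓝 0) := by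
          have := (hq1.dist (tendsto_const_nhds (x := q.1))).add
            (hq2.dist (tendsto_const_nhds (x := q.2)))
          simpa using this
        refine squeeze_zero (fun p => dist_nonneg) (fun p => ?_) hb
        calc dist (p.1 q.1) q.2 ≤ dist (p.1 q.1) (p.1 p.2) + dist (p.1 p.2) q.2 :=
              dist_triangle _ _ _
          _ = dist q.1 p.2 + dist (p.1 p.2) q.2 := by rw [(p.1).dist_eq]
          _ = dist p.2 q.1 + dist (p.1 p.2) q.2 := by rw [dist_comm]
      have horb : Tendsto (fun g : X ≃ᵢ X => g q.1) 𝒢 (𝓝 q.2) := by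
        rw [h𝒢, Ultrafilter.coe_map, tendsto_map'_iff]
        exact horb0
      obtain ⟨F, hF⟩ := exists_pointwise_limit hCI 𝒢 horb
      -- the pointwise limit of the inverses
      have horbS : Tendsto (fun g : X ≃ᵢ X => g.symm q.2) 𝒢 (𝓝 q.1) := by
        rw [tendsto_iff_dist_tendsto_zero]
        have he : (fun g : X ≃ᵢ X => dist (g.symm q.2) q.1)
            = fun g : X ≃ᵢ X => dist q.2 (g q.1) := by
          funext g
          have h1 : dist (g.symm q.2) (g.symm (g q.1)) = dist q.2 (g q.1) := g.symm.dist_eq _ _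
          rw [g.symm_apply_apply] at h1
          exact h1
        rw [he]
        simpa using (tendsto_const_nhds (x := q.2)).dist horb
      have horbS' : Tendsto (fun g : X ≃ᵢ X => g q.2)
          (Ultrafilter.map (fun g : X ≃ᵢ X => g.symm) 𝒢) (𝓝 q.1) := by
        rw [Ultrafilter.coe_map, tendsto_map'_iff]
        exact horbS
      obtain ⟨Fs, hFs0⟩ :=
        exists_pointwise_limit hCI (Ultrafilter.map (fun g : X ≃ᵢ X => g.symm) 𝒢) horbS'
      have hFs : ∀ w, Tendsto (fun g : X ≃ᵢ X => g.symm w) 𝒢 (𝓝 (Fs w)) := by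
        intro w
        have := hFs0 w
        rwa [Ultrafilter.coe_map, tendsto_map'_iff] at this
      -- `F` and `Fs` are mutually inverse isometries
      have hleft : ∀ w, Fs (F w) = w := by
        intro w
        refine tendsto_nhds_unique (hFs (F w)) ?_
        rw [tendsto_iff_dist_tendsto_zero]
        have he : (fun g : X ≃ᵢ X => dist (g.symm (F w)) w)
            = fun g : X ≃ᵢ X => dist (F w) (g w) := by
          funext g
          have h1 : dist (g.symm (F w)) (g.symm (g w)) = dist (F w) (g w) := g.symm.dist_eq _ _
          rw [g.symm_apply_apply] at h1
          exact h1
        rw [he]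
        simpa using (tendsto_const_nhds (x := F w)).dist (hF w)
      have hright : ∀ w, F (Fs w) = w := by
        intro w
        refine tendsto_nhds_unique (hF (Fs w)) ?_
        rw [tendsto_iff_dist_tendsto_zero]
        have he : (fun g : X ≃ᵢ X => dist (g (Fs w)) w)
            = fun g : X ≃ᵢ X => dist (Fs w) (g.symm w) := by
          funext g
          have h1 : dist (g (Fs w)) (g (g.symm w)) = dist (Fs w) (g.symm w) := g.dist_eq _ _
          rw [g.apply_symm_apply] at h1
          exact h1
        rw [he]
        simpa using (tendsto_const_nhds (x := Fs w)).dist (hFs w)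
      have hFiso : Isometry F := Isometry.of_dist_eq fun a b => by
        have h1 : Tendsto (fun g : X ≃ᵢ X => dist (g a) (g b)) 𝒢 (𝓝 (dist (F a) (F b))) :=
          (hF a).dist (hF b)
        have h2 : Tendsto (fun g : X ≃ᵢ X => dist (g a) (g b)) 𝒢 (𝓝 (dist a b)) := by
          have he : (fun g : X ≃ᵢ X => dist (g a) (g b)) = fun _ => dist a b := by
            funext g
            exact g.dist_eq a b
          rw [he]
          exact tendsto_const_nhds
        exact tendsto_nhds_unique h1 h2
      set H : X ≃ᵢ X := ⟨⟨F, Fs, hleft, hright⟩, hFiso⟩ with hH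
      refine ⟨(H, q.1), ?_, ?_⟩
      · have hHq : H q.1 = q.2 := tendsto_nhds_unique (hF q.1) horb
        exact Prod.ext rfl hHq
      · have hfst : Tendsto (fun p : (X ≃ᵢ X) × X => p.1) 𝒰 (𝓝 H) := by
          rw [tendsto_iso_iff]
          intro w
          have h1 := hF w
          rw [h𝒢, Ultrafilter.coe_map, tendsto_map'_iff] at h1
          exact h1
        have hid : Tendsto (fun p : (X ≃ᵢ X) × X => (p.1, p.2)) 𝒰 (𝓝 (H, q.1)) :=
          hfst.prodMk_nhds hq1
        have hid' : Tendsto id (𝒰 : Filter ((X ≃ᵢ X) × X)) (𝓝 (H, q.1)) := by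
          exact hid
        exact hid'

end
end

section
/- Let (X,d) be a metric space such that the action (Iso(X),X) is Cauchy-indivisible. Then the following are equivalent: (i) the action (Iso(X),X) is proper; (ii) for every h in the pointwise closure of the lifted group {ĝ : g ∈ Iso(X)} in C(X̂,X̂), either h(X) ⊆ X or h(X) ⊆ X̂ \ X. -/
open Filter Topology Set UniformSpace

noncomputable section

section Auxiliary

open Filter

universe u_v

variable {X : Type*} [MetricSpace X]

/-- Convergence in `Iso(X)` is pointwise convergence. -/
lemma iso_tendsto_iff {ι : Type*} {l : Filter ι} {f : ι → X ≃ᵢ X} {g : X ≃ᵢ X} :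
    Tendsto f l (𝓝 g) ↔ ∀ x : X, Tendsto (fun i => f i x) l (𝓝 (g x)) := by
  have hn : (𝓝 g : Filter (X ≃ᵢ X)) =
      Filter.comap (fun k : X ≃ᵢ X => (k : X → X)) (𝓝 (g : X → X)) :=
    nhds_induced _ _
  rw [Tendsto, hn, ← Filter.map_le_iff_le_comap, Filter.map_map]
  exact tendsto_pi_nhds

/-- Inversion is continuous along filters in `Iso(X)`. -/
lemma iso_symm_tendsto {ι : Type*} {l : Filter ι} {f : ι → X ≃ᵢ X} {g : X ≃ᵢ X}
    (h : Tendsto f l (𝓝 g)) : Tendsto (fun i => (f i).symm) l (𝓝 g.symm) := by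
  rw [iso_tendsto_iff] at h ⊢
  intro x
  rw [tendsto_iff_dist_tendsto_zero]
  have h1 : Tendsto (fun i => dist x (f i (g.symm x))) l (𝓝 (dist x (g (g.symm x)))) :=
    tendsto_const_nhds.dist (h (g.symm x))
  rw [g.apply_symm_apply, dist_self] at h1
  refine h1.congr fun i => ?_
  rw [← (f i).dist_eq ((f i).symm x) (g.symm x), (f i).apply_symm_apply]

lemma hatIso_coe (g : X ≃ᵢ X) (x : X) :
    hatIso g (x : Completion X) = ((g x : X) : Completion X) :=
  Completion.map_coe g.isometry.uniformContinuous x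

lemma hatIso_isometry (g : X ≃ᵢ X) : Isometry (hatIso g) :=
  g.isometry.completion_map

lemma hatIso_injective : Function.Injective (hatIso (X := X)) := by
  intro g₁ g₂ hg
  ext x
  have := congrFun hg (x : Completion X)
  rw [hatIso_coe, hatIso_coe] at this
  exact (Completion.coe_injective X) this

lemma tendsto_completion_coe_iff {ι : Type*} {l : Filter ι} {f : ι → X} {y : X} :
    Tendsto (fun i => ((f i : X) : Completion X)) l (𝓝 (y : Completion X)) ↔
      Tendsto f l (𝓝 y) := by
  constructor
  · intro h
    rw [tendsto_iff_dist_tendsto_zero]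
    have h1 := h.dist (tendsto_const_nhds (x := (y : Completion X)))
    rw [dist_self] at h1
    refine h1.congr fun i => ?_
    rw [Completion.dist_eq]
  · intro h
    exact ((Completion.continuous_coe X).tendsto y).comp h

/-- The index type of the canonical net associated to a filter. -/
def NetIdx {G : Type*} (F : Filter G) : Type _ :=
  {p : Set G × G // p.1 ∈ F ∧ p.2 ∈ p.1}

instance {G : Type*} (F : Filter G) : Preorder (NetIdx F) where
  le p q := q.1.1 ⊆ p.1.1
  le_refl p := subset_rfl
  le_trans p q r h1 h2 := by
    intro a ha
    exact h1 (h2 ha)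

instance {G : Type*} (F : Filter G) [F.NeBot] : Nonempty (NetIdx F) :=
  ⟨⟨(Set.univ, (F.nonempty_of_mem Filter.univ_mem).choose), Filter.univ_mem,
    Set.mem_univ _⟩⟩

instance {G : Type*} (F : Filter G) [F.NeBot] : IsDirected (NetIdx F) (· ≤ ·) := by
  constructor
  intro p q
  have hs : p.1.1 ∩ q.1.1 ∈ F := Filter.inter_mem p.2.1 q.2.1
  obtain ⟨g, hg⟩ := F.nonempty_of_mem hs
  exact ⟨⟨(p.1.1 ∩ q.1.1, g), hs, hg⟩,
    by exact Set.inter_subset_left, by exact Set.inter_subset_right⟩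

/-- The canonical net associated to a filter. -/
def netMap {G : Type*} (F : Filter G) : NetIdx F → G := fun p => p.1.2

lemma map_netMap {G : Type*} (F : Filter G) [F.NeBot] :
    Filter.map (netMap F) atTop = F := by
  ext s
  rw [Filter.mem_map, Filter.mem_atTop_sets]
  constructor
  · rintro ⟨p₀, hp₀⟩
    refine F.mem_of_superset p₀.2.1 fun g hg => ?_
    exact hp₀ ⟨(p₀.1.1, g), p₀.2.1, hg⟩ (by exact fun _ ha => ha)
  · intro hs
    refine ⟨⟨(s, (F.nonempty_of_mem hs).choose), hs,
      (F.nonempty_of_mem hs).choose_spec⟩, fun p hp => ?_⟩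
    exact (show p.1.1 ⊆ s from hp) p.2.2

/-- Pointwise Cauchy nets of isometries give rise to elements of the Ellis semigroup. -/
lemma exists_ellis_limit {ι : Type*} [Nonempty ι] [Preorder ι] [IsDirected ι (· ≤ ·)]
    [Nonempty X] (g : ι → X ≃ᵢ X)
    (hc : ∀ z : X, Cauchy (Filter.map (fun i => g i z) atTop)) :
    ∃ h ∈ Ellis X, ∀ z : Completion X,
      Tendsto (fun i => hatIso (g i) z) atTop (𝓝 (h z)) := by
  have key : ∀ z : Completion X, Cauchy (Filter.map (fun i => hatIso (g i) z) atTop) := by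
    intro z
    rw [Metric.cauchy_iff]
    refine ⟨Filter.map_neBot, fun ε hε => ?_⟩
    obtain ⟨x₀, hx₀⟩ := (Completion.denseRange_coe (α := X)).exists_dist_lt z
      (show (0 : ℝ) < ε / 4 by linarith)
    have hc0 : Cauchy (Filter.map (fun i => ((g i x₀ : X) : Completion X)) atTop) := by
      have := (hc x₀).map (Completion.uniformContinuous_coe X)
      rwa [Filter.map_map] at this
    obtain ⟨-, hC⟩ := Metric.cauchy_iff.mp hc0
    obtain ⟨t, ht, htε⟩ := hC (ε / 2) (by linarith)
    rw [Filter.mem_map] at ht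
    refine ⟨(fun i => hatIso (g i) z) ''
      ((fun i => ((g i x₀ : X) : Completion X)) ⁻¹' t), Filter.image_mem_map ht, ?_⟩
    rintro _ ⟨i, hi, rfl⟩ _ ⟨j, hj, rfl⟩
    have hmid : dist ((g i x₀ : X) : Completion X) ((g j x₀ : X) : Completion X) < ε / 2 :=
      htε _ hi _ hj
    calc dist (hatIso (g i) z) (hatIso (g j) z)
        ≤ dist (hatIso (g i) z) (hatIso (g i) (x₀ : Completion X))
          + dist (hatIso (g i) (x₀ : Completion X)) (hatIso (g j) (x₀ : Completion X))
          + dist (hatIso (g j) (x₀ : Completion X)) (hatIso (g j) z) :=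
        dist_triangle4 _ _ _ _
      _ < ε := by
          rw [(hatIso_isometry (g i)).dist_eq, (hatIso_isometry (g j)).dist_eq,
            hatIso_coe, hatIso_coe, dist_comm z (x₀ : Completion X)]
          have := dist_comm ((x₀ : Completion X)) z
          linarith
  classical
  haveI : Nonempty (Completion X) := ⟨((Classical.arbitrary X : X) : Completion X)⟩
  refine ⟨fun z => lim (Filter.map (fun i => hatIso (g i) z) atTop), ?_, fun z => (key z).le_nhds_lim⟩
  exact mem_closure_of_tendsto (tendsto_pi_nhds.mpr fun z => (key z).le_nhds_lim)
    (Filter.Eventually.of_forall fun i => ⟨g i, rfl⟩)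

lemma iso_continuous_apply (z : X) : Continuous (fun g : X ≃ᵢ X => g z) := by
  have h1 : Continuous (fun g : X ≃ᵢ X => (g : X → X)) := continuous_induced_dom
  exact (continuous_apply z).comp h1

lemma mapClusterPt_comp' {α β : Type*} [TopologicalSpace α] [TopologicalSpace β]
    {ι : Type*} {l : Filter ι} {f : ι → α} {a : α} {m : α → β} (hm : Continuous m)
    (h : MapClusterPt a l f) : MapClusterPt (m a) l (fun i => m (f i)) := by
  have h1 : Filter.NeBot (𝓝 a ⊓ Filter.map f l) := h
  have h2 : Filter.NeBot (𝓝 (m a) ⊓ Filter.map (fun i => m (f i)) l) := by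
    refine (h1.map m).mono (le_trans Filter.map_inf_le (inf_le_inf (hm.tendsto a) ?_))
    rw [Filter.map_map]
    exact le_rfl
  exact h2

lemma cluster_eq_of_tendsto {α : Type*} [TopologicalSpace α] [T2Space α]
    {ι : Type*} {l : Filter ι} {f : ι → α} {a b : α}
    (h : MapClusterPt a l f) (h2 : Tendsto f l (𝓝 b)) : a = b := by
  have h1 : Filter.NeBot (𝓝 a ⊓ Filter.map f l) := h
  exact eq_of_nhds_neBot (h1.mono (inf_le_inf le_rfl h2))

lemma clusterPt_symm {U : Filter (X ≃ᵢ X)} {k : X ≃ᵢ X}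
    (h : ClusterPt k (Filter.map (fun g : X ≃ᵢ X => g.symm) U)) : ClusterPt k.symm U := by
  have h1 : Filter.NeBot (𝓝 k ⊓ Filter.map (fun g : X ≃ᵢ X => g.symm) U) := h
  have h2 : Filter.NeBot (𝓝 k.symm ⊓ U) := by
    refine (h1.map (fun g : X ≃ᵢ X => g.symm)).mono
      (le_trans Filter.map_inf_le (inf_le_inf ?_ ?_))
    · exact iso_symm_tendsto tendsto_id
    · rw [Filter.map_map,
        show ((fun g : X ≃ᵢ X => g.symm) ∘ fun g : X ≃ᵢ X => g.symm) = id from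
          funext fun g => g.symm_symm, Filter.map_id]
  exact h2

lemma divergentNet_symm {ι : Type*} [Preorder ι] {g : ι → X ≃ᵢ X}
    (h : DivergentNet g) : DivergentNet (fun i => (g i).symm) := by
  intro k hk
  apply h k.symm
  have h1 : ClusterPt k (Filter.map (fun g' : X ≃ᵢ X => g'.symm) (Filter.map g atTop)) := by
    rw [Filter.map_map]; exact hk
  exact clusterPt_symm h1

instance : IsDirected (ULift.{u_v} ℕ) (· ≤ ·) :=
  ⟨fun a b => ⟨⟨max a.down b.down⟩, by exact le_max_left _ _, by exact le_max_right _ _⟩⟩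

lemma map_down_atTop : Filter.map (ULift.down : ULift.{u_v} ℕ → ℕ) atTop = atTop := by
  ext s
  rw [Filter.mem_map, Filter.mem_atTop_sets, Filter.mem_atTop_sets]
  constructor
  · rintro ⟨a, ha⟩
    exact ⟨a.down, fun b hb => ha ⟨b⟩ hb⟩
  · rintro ⟨a, ha⟩
    exact ⟨⟨a⟩, fun b hb => ha b.down hb⟩

/-- Any sequence of isometries whose orbit at one point converges in `X` has a cluster
point in `Iso(X)`, assuming Cauchy indivisibility and the Ellis dichotomy. -/
lemma seq_cluster (hCI : IsoCauchyIndivisible X)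
    (hdich : ∀ h ∈ Ellis X,
        (∀ x : X, h (x : Completion X) ∈ Set.range ((↑) : X → Completion X)) ∨
        (∀ x : X, h (x : Completion X) ∉ Set.range ((↑) : X → Completion X)))
    (c : ℕ → X ≃ᵢ X) (x y : X)
    (hxy : Tendsto (fun n => c n x) atTop (𝓝 y)) :
    ∃ k : X ≃ᵢ X, MapClusterPt k atTop c := by
  by_contra hnc
  push_neg at hnc
  haveI : Nonempty X := ⟨x⟩
  set g : ULift ℕ → X ≃ᵢ X := fun i => c i.down with hg
  have hmap : Filter.map g atTop = Filter.map c atTop := by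
    rw [hg, show (fun i : ULift ℕ => c i.down) = c ∘ ULift.down from rfl,
      ← Filter.map_map, map_down_atTop]
  have hgdiv : DivergentNet g := by
    intro k hk
    apply hnc k
    have h1 : ClusterPt k (Filter.map g atTop) := hk
    rw [hmap] at h1
    exact h1
  have hdown : Tendsto (ULift.down : ULift ℕ → ℕ) atTop atTop := le_of_eq map_down_atTop
  have hxy' : Tendsto (fun i : ULift ℕ => g i x) atTop (𝓝 y) := hxy.comp hdown
  have hCx : Cauchy (Filter.map (fun i : ULift ℕ => g i x) atTop) := hxy'.cauchy_map
  have hall : ∀ z : X, Cauchy (Filter.map (fun i : ULift ℕ => g i z) atTop) :=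
    hCI (ULift ℕ) g hgdiv ⟨x, hCx⟩
  obtain ⟨h, hhE, hht⟩ := exists_ellis_limit g hall
  have hhx : h (x : Completion X) = (y : Completion X) :=
    tendsto_nhds_unique ((hht (x : Completion X)).congr fun i => hatIso_coe (g i) x)
      (((Completion.continuous_coe X).tendsto y).comp hxy')
  rcases hdich h hhE with hin | hout
  · -- h maps X into X : extract the limit map w
    choose w hw using hin
    have hwz : ∀ z : X, Tendsto (fun i : ULift ℕ => g i z) atTop (𝓝 (w z)) := by
      intro z
      rw [← tendsto_completion_coe_iff]
      have h1 := (hht (z : Completion X)).congr fun i => hatIso_coe (g i) z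
      rwa [← hw z] at h1
    have hsymmdiv : DivergentNet (fun i : ULift ℕ => (g i).symm) := divergentNet_symm hgdiv
    have hsx : Tendsto (fun i : ULift ℕ => (g i).symm (w x)) atTop (𝓝 x) := by
      rw [tendsto_iff_dist_tendsto_zero]
      have h1 : Tendsto (fun i : ULift ℕ => dist (w x) (g i x)) atTop
          (𝓝 (dist (w x) (w x))) := tendsto_const_nhds.dist (hwz x)
      rw [dist_self] at h1
      refine h1.congr fun i => ?_
      rw [← (g i).dist_eq ((g i).symm (w x)) x, (g i).apply_symm_apply]
    have hsall : ∀ z : X, Cauchy (Filter.map (fun i : ULift ℕ => (g i).symm z) atTop) :=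
      hCI (ULift ℕ) (fun i => (g i).symm) hsymmdiv ⟨w x, hsx.cauchy_map⟩
    obtain ⟨k, hkE, hkt⟩ := exists_ellis_limit (fun i : ULift ℕ => (g i).symm) hsall
    have hkwx : k ((w x : X) : Completion X) = (x : Completion X) :=
      tendsto_nhds_unique ((hkt _).congr fun i => hatIso_coe ((g i).symm) (w x))
        (((Completion.continuous_coe X).tendsto x).comp hsx)
    rcases hdich k hkE with hkin | hkout
    · choose v hv using hkin
      have hvz : ∀ z : X, Tendsto (fun i : ULift ℕ => (g i).symm z) atTop (𝓝 (v z)) := by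
        intro z
        rw [← tendsto_completion_coe_iff]
        have h1 := (hkt (z : Completion X)).congr fun i => hatIso_coe ((g i).symm) z
        rwa [← hv z] at h1
      have hwv : ∀ z : X, w (v z) = z := by
        intro z
        refine tendsto_nhds_unique (hwz (v z)) ?_
        rw [tendsto_iff_dist_tendsto_zero]
        have h1 : Tendsto (fun i : ULift ℕ => dist (v z) ((g i).symm z)) atTop
            (𝓝 (dist (v z) (v z))) := tendsto_const_nhds.dist (hvz z)
        rw [dist_self] at h1
        refine h1.congr fun i => ?_
        rw [← (g i).dist_eq (v z) ((g i).symm z), (g i).apply_symm_apply]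
      have hvw : ∀ z : X, v (w z) = z := by
        intro z
        refine tendsto_nhds_unique (hvz (w z)) ?_
        rw [tendsto_iff_dist_tendsto_zero]
        have h1 : Tendsto (fun i : ULift ℕ => dist (w z) (g i z)) atTop
            (𝓝 (dist (w z) (w z))) := tendsto_const_nhds.dist (hwz z)
        rw [dist_self] at h1
        refine h1.congr fun i => ?_
        rw [← (g i).dist_eq ((g i).symm (w z)) z, (g i).apply_symm_apply]
      have wiso : Isometry w := by
        refine Isometry.of_dist_eq fun a b => ?_
        refine tendsto_nhds_unique ((hwz a).dist (hwz b)) ?_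
        have h2 : (fun i : ULift ℕ => dist (g i a) (g i b)) = fun _ => dist a b :=
          funext fun i => (g i).dist_eq a b
        rw [h2]
        exact tendsto_const_nhds
      set W : X ≃ᵢ X := ⟨⟨w, v, hvw, hwv⟩, wiso⟩ with hW
      apply hgdiv W
      have hWt : Tendsto g atTop (𝓝 W) := iso_tendsto_iff.mpr fun z => hwz z
      exact (ClusterPt.of_le_nhds hWt : ClusterPt W (Filter.map g atTop))
    · exact hkout (w x) ⟨x, hkwx.symm⟩
  · exact hout x ⟨y, hhx.symm⟩

/-- The key compactness refinement: from a cluster-point-free filter of isometries with a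
convergent orbit, extract a finer filter all of whose orbits converge in `X`. -/
lemma refine_pointwise (hCI : IsoCauchyIndivisible X)
    (hdich : ∀ h ∈ Ellis X,
        (∀ x : X, h (x : Completion X) ∈ Set.range ((↑) : X → Completion X)) ∨
        (∀ x : X, h (x : Completion X) ∉ Set.range ((↑) : X → Completion X)))
    (F : Filter (X ≃ᵢ X)) [F.NeBot]
    (hF : ∀ k : X ≃ᵢ X, ¬ ClusterPt k F)
    (x y : X) (hxy : Tendsto (fun g : X ≃ᵢ X => g x) F (𝓝 y)) :
    ∃ (t : X → X) (U : Filter (X ≃ᵢ X)), U.NeBot ∧ U ≤ F ∧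
      ∀ z : X, Tendsto (fun g : X ≃ᵢ X => g z) U (𝓝 (t z)) := by
  classical
  haveI : Nonempty X := ⟨x⟩
  set C : Set (X ≃ᵢ X) := {k | k x = y} with hC
  -- sequence extraction : closure of every `B ∈ F` meets `C`
  have hkey : ∀ B ∈ F, ∃ k : X ≃ᵢ X, k ∈ C ∧ k ∈ closure B := by
    intro B hB
    have hmem : ∀ n : ℕ, ∃ g' : X ≃ᵢ X, g' ∈ B ∧ dist (g' x) y < 1 / ((n : ℝ) + 1) := by
      intro n
      have h1 := hxy (Metric.ball_mem_nhds y (show (0:ℝ) < 1 / ((n : ℝ) + 1) by positivity))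
      rw [Filter.mem_map] at h1
      obtain ⟨g', hg'⟩ := F.nonempty_of_mem (Filter.inter_mem hB h1)
      exact ⟨g', hg'.1, Metric.mem_ball.mp hg'.2⟩
    choose c hcB hcd using hmem
    have hcx : Tendsto (fun n => c n x) atTop (𝓝 y) := by
      rw [tendsto_iff_dist_tendsto_zero]
      exact squeeze_zero (fun n => dist_nonneg) (fun n => (hcd n).le)
        tendsto_one_div_add_atTop_nhds_zero_nat
    obtain ⟨k, hk⟩ := seq_cluster hCI hdich c x y hcx
    refine ⟨k, ?_, ?_⟩
    · exact cluster_eq_of_tendsto (mapClusterPt_comp' (m := fun g : X ≃ᵢ X => g x) (iso_continuous_apply x) hk) hcx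
    · rw [mem_closure_iff_clusterPt]
      have h1 : Filter.NeBot (𝓝 k ⊓ Filter.map c atTop) := hk
      refine h1.mono (inf_le_inf le_rfl ?_)
      rw [Filter.le_principal_iff, Filter.mem_map]
      exact Filter.univ_mem' hcB
  -- orbit sets are compact
  have hA : ∀ z : X, IsCompact (closure ((fun k : X ≃ᵢ X => k z) '' C)) := by
    intro z
    apply IsSeqCompact.isCompact
    intro u hu
    have hap : ∀ m : ℕ, ∃ km : X ≃ᵢ X, km ∈ C ∧ dist (u m) (km z) < 1 / ((m : ℝ) + 1) := by
      intro m
      obtain ⟨b, hb, hbd⟩ := Metric.mem_closure_iff.mp (hu m) _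
        (show (0:ℝ) < 1 / ((m : ℝ) + 1) by positivity)
      obtain ⟨km, hkm, rfl⟩ := hb
      exact ⟨km, hkm, hbd⟩
    choose km hkmC hkmd using hap
    have hkx : Tendsto (fun m => km m x) atTop (𝓝 y) := by
      have h2 : (fun m => km m x) = fun _ => y := funext fun m => hkmC m
      rw [h2]; exact tendsto_const_nhds
    obtain ⟨k, hk⟩ := seq_cluster hCI hdich km x y hkx
    have hkC : k ∈ C := cluster_eq_of_tendsto (mapClusterPt_comp' (m := fun g : X ≃ᵢ X => g x) (iso_continuous_apply x) hk) hkx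
    obtain ⟨ψ, hψ, hψt⟩ := TopologicalSpace.FirstCountableTopology.tendsto_subseq
      (mapClusterPt_comp' (m := fun g : X ≃ᵢ X => g z) (iso_continuous_apply z) hk)
    refine ⟨k z, subset_closure ⟨k, hkC, rfl⟩, ψ, hψ, ?_⟩
    rw [tendsto_iff_dist_tendsto_zero]
    have hd : ∀ m, dist (u (ψ m)) (k z) ≤ 1 / ((ψ m : ℝ) + 1) + dist (km (ψ m) z) (k z) := by
      intro m
      have h3 := (hkmd (ψ m)).le
      calc dist (u (ψ m)) (k z) ≤ dist (u (ψ m)) (km (ψ m) z) + dist (km (ψ m) z) (k z) :=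
            dist_triangle _ _ _
        _ ≤ 1 / ((ψ m : ℝ) + 1) + dist (km (ψ m) z) (k z) := by linarith
    refine squeeze_zero (fun m => dist_nonneg) hd ?_
    have t1 : Tendsto (fun m => 1 / ((ψ m : ℝ) + 1)) atTop (𝓝 0) :=
      tendsto_one_div_add_atTop_nhds_zero_nat.comp hψ.tendsto_atTop
    have t2 : Tendsto (fun m => dist (km (ψ m) z) (k z)) atTop (𝓝 0) := by
      have h4 := hψt
      rw [tendsto_iff_dist_tendsto_zero] at h4
      exact h4.congr fun m => rfl
    simpa using t1.add t2
  -- the compact candidate set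
  set Q : Set (X → X) := {f | f x = y ∧ (∀ a b : X, dist (f a) (f b) = dist a b) ∧
      ∀ z : X, f z ∈ closure ((fun k : X ≃ᵢ X => k z) '' C)} with hQdef
  have hQclosed : IsClosed Q := by
    have h1 : IsClosed {f : X → X | f x = y} := isClosed_eq (continuous_apply x) continuous_const
    have h2 : IsClosed {f : X → X | ∀ a b : X, dist (f a) (f b) = dist a b} := by
      rw [Set.setOf_forall]
      refine isClosed_iInter fun a => ?_
      rw [Set.setOf_forall]
      exact isClosed_iInter fun b =>
        isClosed_eq ((continuous_apply a).dist (continuous_apply b)) continuous_const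
    have h3 : IsClosed {f : X → X | ∀ z : X, f z ∈ closure ((fun k : X ≃ᵢ X => k z) '' C)} := by
      rw [Set.setOf_forall]
      exact isClosed_iInter fun z => IsClosed.preimage (continuous_apply z) isClosed_closure
    exact h1.inter (h2.inter h3)
  have hQcompact : IsCompact Q := by
    refine (isCompact_univ_pi fun z => hA z).of_isClosed_subset hQclosed ?_
    intro f hf
    exact Set.mem_univ_pi.mpr fun z => hf.2.2 z
  have hcont : Continuous (fun g : X ≃ᵢ X => (g : X → X)) := continuous_induced_dom
  -- finite intersection property
  set Tfam : F.sets → Set (X → X) :=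
    fun B => closure ((fun k : X ≃ᵢ X => (k : X → X)) '' B.1) with hTfam
  have hne : (Q ∩ ⋂ B : F.sets, Tfam B).Nonempty := by
    by_contra hempty
    rw [Set.not_nonempty_iff_eq_empty] at hempty
    obtain ⟨u, hu⟩ := hQcompact.elim_finite_subfamily_closed Tfam
      (fun B => isClosed_closure) hempty
    have hB₀ : (⋂ B ∈ u, (B : F.sets).1) ∈ F := Filter.biInter_finset_mem u |>.mpr fun B _ => B.2
    obtain ⟨k, hkC, hkcl⟩ := hkey _ hB₀
    have hkQ : (k : X → X) ∈ Q :=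
      ⟨hkC, fun a b => k.dist_eq a b, fun z => subset_closure ⟨k, hkC, rfl⟩⟩
    have hkT : ∀ B ∈ u, (k : X → X) ∈ Tfam B := by
      intro B hBu
      have h1 : k ∈ closure (B.1 : Set (X ≃ᵢ X)) :=
        closure_mono (Set.biInter_subset_of_mem hBu) hkcl
      exact image_closure_subset_closure_image hcont (Set.mem_image_of_mem _ h1)
    exact Set.eq_empty_iff_forall_notMem.mp hu (k : X → X) ⟨hkQ, Set.mem_iInter₂.mpr hkT⟩
  obtain ⟨kstar, hkQ', hkT'⟩ := hne
  -- pointwise clustering of `kstar` along `F`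
  have hclust : ∀ B ∈ F, ∀ I : Set X, I.Finite → ∀ ε : ℝ, 0 < ε →
      ∃ g' : X ≃ᵢ X, g' ∈ B ∧ ∀ z ∈ I, dist (g' z) (kstar z) < ε := by
    intro B hB I hIfin ε hε
    have hmem : kstar ∈ closure ((fun k : X ≃ᵢ X => (k : X → X)) '' B) :=
      Set.mem_iInter.mp hkT' ⟨B, hB⟩
    have hO : {f : X → X | ∀ z ∈ I, dist (f z) (kstar z) < ε} ∈ 𝓝 kstar := by
      have heq : {f : X → X | ∀ z ∈ I, dist (f z) (kstar z) < ε}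
          = ⋂ z ∈ I, {f : X → X | dist (f z) (kstar z) < ε} := by
        ext f; simp
      rw [heq]
      refine (Filter.biInter_mem hIfin).mpr fun z _ => ?_
      have hop : IsOpen {f : X → X | dist (f z) (kstar z) < ε} :=
        isOpen_lt ((continuous_apply z).dist continuous_const) continuous_const
      exact hop.mem_nhds (by simpa [dist_self] using hε)
    obtain ⟨f, hfO, hfB⟩ := mem_closure_iff_nhds.mp hmem _ hO
    obtain ⟨g', hg'B, rfl⟩ := hfB
    exact ⟨g', hg'B, hfO⟩
  -- the refined filter
  set NF : Filter (X ≃ᵢ X) :=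
    ⨅ z : X, Filter.comap (fun g : X ≃ᵢ X => g z) (𝓝 (kstar z)) with hNF
  have hNFne : (F ⊓ NF).NeBot := by
    rw [← Filter.forall_mem_nonempty_iff_neBot]
    intro s hs
    rw [Filter.mem_inf_iff] at hs
    obtain ⟨t₁, ht₁, t₂, ht₂, rfl⟩ := hs
    rw [hNF, Filter.mem_iInf'] at ht₂
    obtain ⟨I, hIfin, V, hV, hVuniv, hVeq, -⟩ := ht₂
    have hV' : ∀ z : X, ∃ ε : ℝ, 0 < ε ∧
        ∀ g' : X ≃ᵢ X, dist (g' z) (kstar z) < ε → g' ∈ V z := by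
      intro z
      obtain ⟨Wz, hWz, hWsub⟩ := Filter.mem_comap.mp (hV z)
      obtain ⟨ε, hεp, hball⟩ := Metric.mem_nhds_iff.mp hWz
      exact ⟨ε, hεp, fun g' hg' => hWsub (hball hg')⟩
    choose ε hεpos hεsub using hV'
    rcases I.eq_empty_or_nonempty with hIe | hIne
    · obtain ⟨g', hg'⟩ := F.nonempty_of_mem ht₁
      refine ⟨g', hg', ?_⟩
      rw [hVeq, hIe]
      simp
    · obtain ⟨z₀, hz₀I, hz₀min⟩ := Set.exists_min_image I ε hIfin hIne
      obtain ⟨g', hg'B, hg'close⟩ := hclust t₁ ht₁ I hIfin (ε z₀) (hεpos z₀)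
      refine ⟨g', hg'B, ?_⟩
      rw [hVeq]
      exact Set.mem_iInter₂.mpr fun z hz =>
        hεsub z g' (lt_of_lt_of_le (hg'close z hz) (hz₀min z hz))
  refine ⟨kstar, F ⊓ NF, hNFne, inf_le_left, fun z => ?_⟩
  have h1 : (F ⊓ NF) ≤ Filter.comap (fun g : X ≃ᵢ X => g z) (𝓝 (kstar z)) := by
    refine le_trans inf_le_right ?_
    rw [hNF]
    exact iInf_le _ z
  exact Filter.tendsto_comap.mono_left h1

end Auxiliary

/-- For a Cauchy-indivisible action `(Iso(X), X)`: the action is proper iff every `h`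
in the pointwise closure of the lifted group `{ĝ}` in `C(X̂, X̂)` satisfies
`h(X) ⊆ X` or `h(X) ⊆ X̂ \\ X`. -/
theorem isoProper_iff_closure_dichotomy (X : Type*) [MetricSpace X]
    (hCI : IsoCauchyIndivisible X) :
    IsoProperLimits X ↔
      ∀ h ∈ Ellis X,
        (∀ x : X, h (x : Completion X) ∈ Set.range ((↑) : X → Completion X)) ∨
        (∀ x : X, h (x : Completion X) ∉ Set.range ((↑) : X → Completion X)) := by
  constructor
  · -- properness implies the dichotomy
    intro hproper h hE
    by_cases hA : ∀ x : X, h (x : Completion X) ∈ Set.range ((↑) : X → Completion X)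
    · exact Or.inl hA
    · push_neg at hA
      obtain ⟨x₂, hx₂⟩ := hA
      right
      intro x₁ hx₁
      exfalso
      obtain ⟨y, hy⟩ := hx₁
      -- approximate h at the two points x₁, x₂ by lifted isometries
      have hnn : ∀ n : ℕ, ∃ g' : X ≃ᵢ X,
          dist (hatIso g' (x₁ : Completion X)) (h (x₁ : Completion X)) < 1 / ((n : ℝ) + 1) ∧
          dist (hatIso g' (x₂ : Completion X)) (h (x₂ : Completion X)) < 1 / ((n : ℝ) + 1) := by
        intro n
        have hpos : (0:ℝ) < 1 / ((n : ℝ) + 1) := by positivity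
        have hO1 : IsOpen {f : Completion X → Completion X |
            dist (f (x₁ : Completion X)) (h (x₁ : Completion X)) < 1 / ((n : ℝ) + 1)} :=
          isOpen_lt ((continuous_apply _).dist continuous_const) continuous_const
        have hO2 : IsOpen {f : Completion X → Completion X |
            dist (f (x₂ : Completion X)) (h (x₂ : Completion X)) < 1 / ((n : ℝ) + 1)} :=
          isOpen_lt ((continuous_apply _).dist continuous_const) continuous_const
        have hO : ({f : Completion X → Completion X |
            dist (f (x₁ : Completion X)) (h (x₁ : Completion X)) < 1 / ((n : ℝ) + 1)} ∩
            {f : Completion X → Completion X |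
            dist (f (x₂ : Completion X)) (h (x₂ : Completion X)) < 1 / ((n : ℝ) + 1)}) ∈ 𝓝 h := by
          refine Filter.inter_mem ?_ ?_
          · exact hO1.mem_nhds (by simpa [dist_self] using hpos)
          · exact hO2.mem_nhds (by simpa [dist_self] using hpos)
        obtain ⟨f, hfO, hfS⟩ := mem_closure_iff_nhds.mp hE _ hO
        obtain ⟨g', rfl⟩ := hfS
        exact ⟨g', hfO.1, hfO.2⟩
      choose c hc₁ hc₂ using hnn
      have hcx₁ : Tendsto (fun n => c n x₁) atTop (𝓝 y) := by
        rw [← tendsto_completion_coe_iff, hy, tendsto_iff_dist_tendsto_zero]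
        refine squeeze_zero (fun n => dist_nonneg) (fun n => ?_)
          tendsto_one_div_add_atTop_nhds_zero_nat
        rw [← hatIso_coe]
        exact (hc₁ n).le
      have hcx₂ : Tendsto (fun n => ((c n x₂ : X) : Completion X)) atTop
          (𝓝 (h (x₂ : Completion X))) := by
        rw [tendsto_iff_dist_tendsto_zero]
        refine squeeze_zero (fun n => dist_nonneg) (fun n => ?_)
          tendsto_one_div_add_atTop_nhds_zero_nat
        rw [← hatIso_coe]
        exact (hc₂ n).le
      have hdown : Tendsto (ULift.down : ULift ℕ → ℕ) atTop atTop := le_of_eq map_down_atTop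
      have hdivc : DivergentNet (fun i : ULift ℕ => c i.down) := by
        intro k hk
        have h1 : MapClusterPt (k x₂) atTop (fun i : ULift ℕ => c i.down x₂) :=
          mapClusterPt_comp' (m := fun g' : X ≃ᵢ X => g' x₂) (iso_continuous_apply x₂) hk
        have h2 : MapClusterPt ((k x₂ : X) : Completion X) atTop
            (fun i : ULift ℕ => ((c i.down x₂ : X) : Completion X)) :=
          mapClusterPt_comp' (m := ((↑) : X → Completion X)) (Completion.continuous_coe X) h1
        have h3 : Tendsto (fun i : ULift ℕ => ((c i.down x₂ : X) : Completion X)) atTop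
            (𝓝 (h (x₂ : Completion X))) := hcx₂.comp hdown
        exact hx₂ ⟨k x₂, cluster_eq_of_tendsto h2 h3⟩
      exact hproper (ULift ℕ) (fun i => c i.down) hdivc x₁ y (hcx₁.comp hdown)
  · -- the dichotomy implies properness
    intro hdich ι _ _ _ g hgdiv x y hxy
    haveI : Nonempty X := ⟨x⟩
    set F : Filter (X ≃ᵢ X) := Filter.map g atTop with hF
    haveI hFne : F.NeBot := Filter.map_neBot
    have hFnc : ∀ k : X ≃ᵢ X, ¬ ClusterPt k F := fun k hk => hgdiv k hk
    have hevx : Tendsto (fun g' : X ≃ᵢ X => g' x) F (𝓝 y) := by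
      rw [hF, Filter.tendsto_map'_iff]
      exact hxy
    obtain ⟨w, U, hUne, hUF, hUt⟩ := refine_pointwise hCI hdich F hFnc x y hevx
    haveI := hUne
    set F₂ : Filter (X ≃ᵢ X) := Filter.map (fun g' : X ≃ᵢ X => g'.symm) U with hF₂
    haveI hF₂ne : F₂.NeBot := by rw [hF₂]; exact hUne.map _
    have hF₂nc : ∀ k : X ≃ᵢ X, ¬ ClusterPt k F₂ := by
      intro k hk
      rw [hF₂] at hk
      exact hFnc k.symm ((clusterPt_symm hk).mono hUF)
    have hevwx : Tendsto (fun g' : X ≃ᵢ X => g' (w x)) F₂ (𝓝 x) := by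
      rw [hF₂, Filter.tendsto_map'_iff, tendsto_iff_dist_tendsto_zero]
      have h1 : Tendsto (fun g' : X ≃ᵢ X => dist (w x) (g' x)) U
          (𝓝 (dist (w x) (w x))) := tendsto_const_nhds.dist (hUt x)
      rw [dist_self] at h1
      refine h1.congr fun g' => ?_
      show dist (w x) (g' x) = dist (g'.symm (w x)) x
      rw [← g'.dist_eq (g'.symm (w x)) x, g'.apply_symm_apply]
    obtain ⟨v, U₂, hU₂ne, hU₂F₂, hU₂t⟩ := refine_pointwise hCI hdich F₂ hF₂nc (w x) x hevwx
    haveI := hU₂ne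
    have hsymmU₂ : Tendsto (fun g' : X ≃ᵢ X => g'.symm) U₂ U := by
      have h1 : Filter.map (fun g' : X ≃ᵢ X => g'.symm) U₂
          ≤ Filter.map (fun g' : X ≃ᵢ X => g'.symm) F₂ := Filter.map_mono hU₂F₂
      rw [hF₂, Filter.map_map,
        show ((fun g' : X ≃ᵢ X => g'.symm) ∘ fun g' : X ≃ᵢ X => g'.symm) = id from
          funext fun g' => g'.symm_symm, Filter.map_id] at h1
      exact h1
    have hii : ∀ z : X, Tendsto (fun g' : X ≃ᵢ X => g'.symm z) U₂ (𝓝 (w z)) :=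
      fun z => (hUt z).comp hsymmU₂
    have hwv : ∀ u : X, w (v u) = u := by
      intro u
      have h2 : Tendsto (fun g' : X ≃ᵢ X => g'.symm (v u)) U₂ (𝓝 u) := by
        rw [tendsto_iff_dist_tendsto_zero]
        have h1 : Tendsto (fun g' : X ≃ᵢ X => dist (v u) (g' u)) U₂
            (𝓝 (dist (v u) (v u))) := tendsto_const_nhds.dist (hU₂t u)
        rw [dist_self] at h1
        refine h1.congr fun g' => ?_
        rw [← g'.dist_eq (g'.symm (v u)) u, g'.apply_symm_apply]
      exact tendsto_nhds_unique (hii (v u)) h2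
    have hvw : ∀ z : X, v (w z) = z := by
      intro z
      have h2 : Tendsto (fun g' : X ≃ᵢ X => g' (w z)) U₂ (𝓝 z) := by
        rw [tendsto_iff_dist_tendsto_zero]
        have h1 : Tendsto (fun g' : X ≃ᵢ X => dist (w z) (g'.symm z)) U₂
            (𝓝 (dist (w z) (w z))) := tendsto_const_nhds.dist (hii z)
        rw [dist_self] at h1
        refine h1.congr fun g' => ?_
        rw [← g'.symm.dist_eq (g' (w z)) z, g'.symm_apply_apply]
      exact tendsto_nhds_unique (hU₂t (w z)) h2
    have hwiso : Isometry w := by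
      refine Isometry.of_dist_eq fun a b => ?_
      have h1 : Tendsto (fun g' : X ≃ᵢ X => dist (g'.symm a) (g'.symm b)) U₂
          (𝓝 (dist (w a) (w b))) := (hii a).dist (hii b)
      have h2 : (fun g' : X ≃ᵢ X => dist (g'.symm a) (g'.symm b)) = fun _ => dist a b :=
        funext fun g' => g'.symm.dist_eq a b
      rw [h2] at h1
      exact tendsto_nhds_unique h1 tendsto_const_nhds
    set W : X ≃ᵢ X := ⟨⟨w, v, hvw, hwv⟩, hwiso⟩ with hW
    apply hgdiv W
    have hWt : Tendsto (fun g' : X ≃ᵢ X => g'.symm) U₂ (𝓝 W) :=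
      iso_tendsto_iff.mpr fun z => hii z
    have hle : Filter.map (fun g' : X ≃ᵢ X => g'.symm) U₂ ≤ 𝓝 W ⊓ F :=
      le_inf hWt (hsymmU₂.trans hUF)
    exact ((hU₂ne.map _).mono hle : Filter.NeBot (𝓝 W ⊓ F))

end
end

section
/- Let (X,d) be a metric space such that the action (Iso(X),X) is proper. Then the following are equivalent: (i) (Iso(X),X) is Cauchy-indivisible; (ii) whenever {g_i} is a net in Iso(X) with no convergent subnet in Iso(X) such that {g_i x} is a Cauchy net for some x ∈ X, then for every y ∈ X the net {g_i y} has at most one cluster point in the completion X̂ of X. -/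
open Filter Topology Set UniformSpace

noncomputable section

section AuxProofCI

variable {X : Type*} [MetricSpace X]

attribute [local instance] Classical.decEq

private lemma isoEval_continuous (p : X) :
    Continuous (fun g : X ≃ᵢ X => (g : X → X) p) :=
  (continuous_apply p).comp continuous_induced_dom

private lemma mapClusterPt_eval {ι : Type*} [Preorder ι] {u : ι → X ≃ᵢ X} {h : X ≃ᵢ X}
    (hcl : MapClusterPt h atTop u) (p : X) :
    MapClusterPt (h p) atTop (fun i => u i p) :=
  MapClusterPt.continuousAt_comp ((isoEval_continuous p).continuousAt) hcl

private lemma clusterPt_eq_of_tendsto {ι : Type*} [Preorder ι]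
    {Y : Type*} [MetricSpace Y] {u : ι → Y} {a b : Y}
    (h1 : MapClusterPt a atTop u) (h2 : Tendsto u atTop (𝓝 b)) : a = b :=
  eq_of_nhds_neBot (h1.clusterPt.mono h2)

private lemma clusterPt_mem_closed {ι : Type*} [Preorder ι] {Y : Type*} [MetricSpace Y]
    {u : ι → Y} {a : Y} {C : Set Y} (hC : IsClosed C) (hu : ∀ i, u i ∈ C)
    (h : MapClusterPt a atTop u) : a ∈ C := by
  rw [← hC.closure_eq, mem_closure_iff_clusterPt]
  exact h.clusterPt.mono (le_principal_iff.2 (mem_map.2 (univ_mem' hu)))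

private lemma dist_symm_apply (e : X ≃ᵢ X) (a b : X) : dist (e.symm a) b = dist a (e b) := by
  rw [← e.dist_eq (e.symm a) b, e.apply_symm_apply]

private lemma dist_apply_symm (e : X ≃ᵢ X) (a b : X) : dist (e a) b = dist a (e.symm b) := by
  rw [← e.symm.dist_eq (e a) b, e.symm_apply_apply]

/-- An order isomorphism between `ULift ℕ` and `ℕ`. -/
private def uliftIso : ULift.{r} ℕ ≃o ℕ :=
  { Equiv.ulift with map_rel_iff' := Iff.rfl }

private lemma map_down_atTop_s4 :
    map (ULift.down : ULift.{r} ℕ → ℕ) atTop = (atTop : Filter ℕ) :=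
  uliftIso.map_atTop

private lemma lift_divergent {s : ℕ → X ≃ᵢ X} (hd : DivergentNet s) :
    DivergentNet (fun l : ULift.{r} ℕ => s l.down) :=
  fun h hcl => hd h (MapClusterPt.of_comp (uliftIso.tendsto_atTop) hcl)

private lemma lift_map_eq {Y : Type*} (f : ℕ → Y) :
    map (fun l : ULift.{r} ℕ => f l.down) atTop = map f atTop := by
  rw [← map_down_atTop_s4, map_map]
  rfl

private lemma lift_cauchy {Y : Type*} [MetricSpace Y] {f : ℕ → Y}
    (hc : Cauchy (map f atTop)) :
    Cauchy (map (fun l : ULift.{r} ℕ => f l.down) atTop) := by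
  rwa [lift_map_eq]

private lemma lift_clusterPt {Y : Type*} [MetricSpace Y] {f : ℕ → Y} {z : Y}
    (h : MapClusterPt z atTop f) :
    MapClusterPt z atTop (fun l : ULift.{r} ℕ => f l.down) := by
  show ClusterPt z _
  rw [lift_map_eq]
  exact h

/-- Sequence version of properness, obtained from `IsoProperLimits` by lifting `ℕ`
to the appropriate universe. -/
private lemma seq_div (hP : IsoProperLimits X) {s : ℕ → X ≃ᵢ X} {x' p : X}
    (hs : Tendsto (fun n => s n x') atTop (𝓝 p))
    (hd : DivergentNet s) : False := by
  exact hP (ULift ℕ) (fun l => s l.down) (lift_divergent hd) x' p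
    (hs.comp (uliftIso.tendsto_atTop))

/-- Auxiliary chain of finite sets used to build a separated sequence. -/
private def chainFinsets (F : Finset X → X ≃ᵢ X) (y : X) : ℕ → Finset X
  | 0 => ∅
  | n + 1 => insert ((F (chainFinsets F y n)) y) (chainFinsets F y n)

/-- The orbit of `y` under isometries sending `x` to `p` is totally bounded. -/
private lemma stab_finite_net (hP : IsoProperLimits X) (x p y : X) :
    ∀ ε > 0, ∃ t : Finset X, ∀ h : X ≃ᵢ X, h x = p → ∃ c ∈ t, dist (h y) c < ε := by
  intro ε hε
  by_contra hbad
  push_neg at hbad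
  choose F hF1 hF2 using hbad
  set v : ℕ → Finset X := chainFinsets F y with hv
  set k : ℕ → X ≃ᵢ X := fun n => F (v n) with hk
  have hvs : ∀ n, v (n + 1) = insert (k n y) (v n) := fun n => rfl
  have hvm : Monotone v := monotone_nat_of_le_succ (fun n => by
    rw [hvs]; exact Finset.subset_insert _ _)
  have hmem : ∀ m n, m < n → k m y ∈ v n := by
    intro m n hmn
    exact hvm hmn (by rw [hvs]; exact Finset.mem_insert_self _ _)
  have hsep : ∀ m n, m < n → ε ≤ dist (k n y) (k m y) := fun m n hmn =>
    hF2 (v n) (k m y) (hmem m n hmn)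
  have hdiv : DivergentNet k := by
    intro h hcl
    have h2 : MapClusterPt (h y) atTop (fun n => k n y) := mapClusterPt_eval hcl y
    have h3 := (mapClusterPt_iff_frequently.1 h2) (Metric.ball (h y) (ε / 2))
      (Metric.ball_mem_nhds _ (by linarith))
    rw [frequently_atTop] at h3
    obtain ⟨m, -, hm⟩ := h3 0
    obtain ⟨n, hn, hn2⟩ := h3 (m + 1)
    have hsepmn := hsep m n hn
    rw [Metric.mem_ball] at hm hn2
    have : dist (k n y) (k m y) < ε := by
      calc dist (k n y) (k m y) ≤ dist (k n y) (h y) + dist (h y) (k m y) := dist_triangle _ _ _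
        _ < ε / 2 + ε / 2 := add_lt_add hn2 (by rw [dist_comm]; exact hm)
        _ = ε := by ring
    linarith
  have hconst : Tendsto (fun n => k n x) atTop (𝓝 p) := by
    have : (fun n => k n x) = fun _ => p := funext fun n => hF1 (v n)
    rw [this]; exact tendsto_const_nhds
  exact seq_div hP hconst hdiv

/-- Tail approximation: if `G i x → p` then eventually `G i y` is close to the orbit
of `y` under isometries sending `x` to `p`. -/
private lemma tail_approx_pt (hP : IsoProperLimits X)
    {ι : Type*} [Nonempty ι] [Preorder ι] [IsDirected ι (· ≤ ·)]
    {G : ι → X ≃ᵢ X} {x p : X} (hG : Tendsto (fun i => G i x) atTop (𝓝 p)) (y : X) :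
    ∀ ε > 0, ∃ i0 : ι, ∀ i, i0 ≤ i →
      ∃ h : X ≃ᵢ X, h x = p ∧ dist (G i y) (h y) < ε := by
  intro ε hε
  by_contra hbad
  push_neg at hbad
  have hthr : ∀ n : ℕ, ∃ m : ι, ∀ i, m ≤ i → dist (G i x) p < 1 / ((n : ℝ) + 1) := by
    intro n
    have h1 := (Metric.tendsto_nhds.1 hG) (1 / ((n : ℝ) + 1)) (by positivity)
    rw [eventually_atTop] at h1
    obtain ⟨m, hm⟩ := h1
    exact ⟨m, fun i hi => hm i hi⟩
  choose m hm using hthr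
  have hsel : ∀ n : ℕ, ∃ i, m n ≤ i ∧ ∀ h : X ≃ᵢ X, h x = p → ε ≤ dist (G i y) (h y) :=
    fun n => hbad (m n)
  choose idx hidx1 hidx2 using hsel
  have hsx : Tendsto (fun n => G (idx n) x) atTop (𝓝 p) := by
    rw [Metric.tendsto_nhds]
    intro δ hδ
    obtain ⟨N, hN⟩ := exists_nat_one_div_lt hδ
    filter_upwards [eventually_ge_atTop N] with n hn
    have h1 : dist (G (idx n) x) p < 1 / ((n : ℝ) + 1) := hm n _ (hidx1 n)
    have h2 : (1 : ℝ) / ((n : ℝ) + 1) ≤ 1 / ((N : ℝ) + 1) :=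
      one_div_le_one_div_of_le (by positivity) (by exact_mod_cast Nat.succ_le_succ hn)
    linarith
  have hsdiv : DivergentNet (fun n => G (idx n)) := by
    intro h hcl
    have hhx : h x = p := clusterPt_eq_of_tendsto (mapClusterPt_eval hcl x) hsx
    have hCc : IsClosed {z : X | ∀ kk : X ≃ᵢ X, kk x = p → ε ≤ dist z (kk y)} := by
      have : {z : X | ∀ kk : X ≃ᵢ X, kk x = p → ε ≤ dist z (kk y)} =
          ⋂ (kk : X ≃ᵢ X) (_ : kk x = p), {z : X | ε ≤ dist z (kk y)} := by
        ext z; simp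
      rw [this]
      exact isClosed_iInter fun kk => isClosed_iInter fun _ =>
        isClosed_le continuous_const (continuous_id.dist continuous_const)
    have hy' := clusterPt_mem_closed hCc (fun n => fun kk hkk => hidx2 n kk hkk)
      (mapClusterPt_eval hcl y)
    have := hy' h hhx
    rw [dist_self] at this
    linarith
  exact seq_div hP hsx hsdiv

/-- Along an ultrafilter refining `atTop`, the orbit nets converge in `X` itself,
provided the base point orbit converges in `X`. -/
private lemma ultra_limit (hP : IsoProperLimits X)
    {ι : Type*} [Nonempty ι] [Preorder ι] [IsDirected ι (· ≤ ·)]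
    {G : ι → X ≃ᵢ X} {x p : X} (hG : Tendsto (fun i => G i x) atTop (𝓝 p))
    (U : Ultrafilter ι) (hU : (U : Filter ι) ≤ atTop) (y : X) :
    ∃ q : X, Tendsto (fun i => G i y) (U : Filter ι) (𝓝 q) := by
  haveI : (U : Filter ι).NeBot := U.neBot
  have hcau : Cauchy (map (fun i => ((G i y : X) : Completion X)) (U : Filter ι)) := by
    rw [Metric.cauchy_iff]
    refine ⟨map_neBot, fun ε hε => ?_⟩
    obtain ⟨i0, hi0⟩ := tail_approx_pt hP hG y (ε / 5) (by linarith)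
    obtain ⟨t, ht⟩ := stab_finite_net hP x p y (ε / 5) (by linarith)
    have hmem : (⋃ c ∈ (t : Set X), Metric.ball ((c : X) : Completion X) (2 * ε / 5)) ∈
        map (fun i => ((G i y : X) : Completion X)) (U : Filter ι) := by
      rw [mem_map]
      apply hU
      apply mem_of_superset (Ici_mem_atTop i0)
      intro i hi
      obtain ⟨h, hhx, hh⟩ := hi0 i hi
      obtain ⟨c, hc, hc2⟩ := ht h hhx
      simp only [Set.mem_preimage, Set.mem_iUnion, Metric.mem_ball]
      refine ⟨c, hc, ?_⟩
      rw [Completion.dist_eq]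
      calc dist (G i y) c ≤ dist (G i y) (h y) + dist (h y) c := dist_triangle _ _ _
        _ < ε / 5 + ε / 5 := add_lt_add hh hc2
        _ = 2 * ε / 5 := by ring
    have hmem2 : (⋃ c ∈ (t : Set X), Metric.ball ((c : X) : Completion X) (2 * ε / 5)) ∈
        Ultrafilter.map (fun i => ((G i y : X) : Completion X)) U := by
      rw [← Ultrafilter.coe_map] at hmem
      exact hmem
    obtain ⟨c, hc, hcU⟩ := (Ultrafilter.finite_biUnion_mem_iff t.finite_toSet).1 hmem2
    refine ⟨Metric.ball ((c : X) : Completion X) (2 * ε / 5), ?_, ?_⟩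
    · have := hcU
      rw [← Ultrafilter.coe_map]
      exact this
    · intro a ha b hb
      rw [Metric.mem_ball] at ha hb
      calc dist a b ≤ dist a ((c : X) : Completion X) + dist ((c : X) : Completion X) b :=
            dist_triangle _ _ _
        _ < 2 * ε / 5 + 2 * ε / 5 := add_lt_add ha (by rw [dist_comm]; exact hb)
        _ < ε := by linarith
  obtain ⟨zhat, hz⟩ := CompleteSpace.complete hcau
  have happrox : ∀ n : ℕ, ∃ h : X ≃ᵢ X, h x = p ∧
      dist ((h y : X) : Completion X) zhat < 1 / ((n : ℝ) + 1) := by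
    intro n
    obtain ⟨i0, hi0⟩ := tail_approx_pt hP hG y (1 / ((n : ℝ) + 1) / 2) (by positivity)
    have ev1 : ∀ᶠ i in (U : Filter ι),
        dist ((G i y : X) : Completion X) zhat < 1 / ((n : ℝ) + 1) / 2 :=
      Metric.tendsto_nhds.1 hz _ (by positivity)
    have ev2 : ∀ᶠ i in (U : Filter ι), i0 ≤ i := hU (Ici_mem_atTop i0)
    obtain ⟨i, h1, h2⟩ := (ev1.and ev2).exists
    obtain ⟨h, hhx, hdy⟩ := hi0 i h2
    refine ⟨h, hhx, ?_⟩
    have hdy' : dist (h y) (G i y) < 1 / ((n : ℝ) + 1) / 2 := by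
      rw [dist_comm]; exact hdy
    calc dist ((h y : X) : Completion X) zhat
        ≤ dist ((h y : X) : Completion X) ((G i y : X) : Completion X)
          + dist ((G i y : X) : Completion X) zhat := dist_triangle _ _ _
      _ < 1 / ((n : ℝ) + 1) / 2 + 1 / ((n : ℝ) + 1) / 2 := by
          rw [Completion.dist_eq]
          exact add_lt_add hdy' h1
      _ = 1 / ((n : ℝ) + 1) := add_halves _
  choose k hk1 hk2 using happrox
  have hky : Tendsto (fun n => ((k n y : X) : Completion X)) atTop (𝓝 zhat) := by
    rw [Metric.tendsto_nhds]
    intro δ hδ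
    obtain ⟨N, hN⟩ := exists_nat_one_div_lt hδ
    filter_upwards [eventually_ge_atTop N] with n hn
    have h1 := hk2 n
    have hle : 1 / ((n : ℝ) + 1) ≤ 1 / ((N : ℝ) + 1) :=
      one_div_le_one_div_of_le (by positivity) (by exact_mod_cast Nat.succ_le_succ hn)
    linarith
  have hkx : Tendsto (fun n => k n x) atTop (𝓝 p) := by
    have : (fun n => k n x) = fun _ => p := funext fun n => hk1 n
    rw [this]; exact tendsto_const_nhds
  have hclk : ∃ κ : X ≃ᵢ X, MapClusterPt κ atTop k := by
    by_contra hnc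
    push_neg at hnc
    exact seq_div hP hkx (fun h => hnc h)
  obtain ⟨κ, hκ⟩ := hclk
  have h1 : MapClusterPt ((κ y : X) : Completion X) atTop
      (fun n => ((k n y : X) : Completion X)) :=
    MapClusterPt.continuousAt_comp ((Completion.continuous_coe X).continuousAt)
      (mapClusterPt_eval hκ y)
  have h2 : ((κ y : X) : Completion X) = zhat := clusterPt_eq_of_tendsto h1 hky
  refine ⟨κ y, ?_⟩
  have h3 : Tendsto (fun i => ((G i y : X) : Completion X)) (U : Filter ι)
      (𝓝 ((κ y : X) : Completion X)) := by
    rw [h2]; exact hz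
  exact ((Completion.isUniformInducing_coe X).isInducing.tendsto_nhds_iff).2 h3

/-- Net version of properness in an arbitrary universe: a divergent net of isometries
cannot have an orbit converging inside `X`. -/
private lemma proper_nets (hP : IsoProperLimits X)
    {ι : Type*} [Nonempty ι] [Preorder ι] [IsDirected ι (· ≤ ·)]
    {g : ι → X ≃ᵢ X} (hg : DivergentNet g) {x p : X}
    (hgx : Tendsto (fun i => g i x) atTop (𝓝 p)) : False := by
  haveI : (atTop : Filter ι).NeBot := atTop_neBot
  set U := Ultrafilter.of (atTop : Filter ι) with hUdef
  have hU : (U : Filter ι) ≤ atTop := Ultrafilter.of_le _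
  haveI : (U : Filter ι).NeBot := U.neBot
  have hφ : ∀ y, ∃ q, Tendsto (fun i => g i y) (U : Filter ι) (𝓝 q) :=
    ultra_limit hP hgx U hU
  choose φ hφ using hφ
  have hGsymm : Tendsto (fun i => (g i).symm p) atTop (𝓝 x) := by
    rw [Metric.tendsto_nhds]
    intro ε hε
    filter_upwards [Metric.tendsto_nhds.1 hgx ε hε] with i hi
    rw [dist_symm_apply]
    rw [dist_comm]
    exact hi
  have hψ : ∀ b, ∃ q, Tendsto (fun i => (g i).symm b) (U : Filter ι) (𝓝 q) :=
    ultra_limit hP hGsymm U hU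
  choose ψ hψ using hψ
  have hli : ∀ y, ψ (φ y) = y := by
    intro y
    refine tendsto_nhds_unique (hψ (φ y)) ?_
    rw [Metric.tendsto_nhds]
    intro ε hε
    filter_upwards [Metric.tendsto_nhds.1 (hφ y) ε hε] with i hi
    rw [dist_symm_apply, dist_comm]
    exact hi
  have hri : ∀ b, φ (ψ b) = b := by
    intro b
    refine tendsto_nhds_unique (hφ (ψ b)) ?_
    rw [Metric.tendsto_nhds]
    intro ε hε
    filter_upwards [Metric.tendsto_nhds.1 (hψ b) ε hε] with i hi
    rw [dist_apply_symm, dist_comm]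
    exact hi
  have hiso : Isometry φ := by
    apply Isometry.of_dist_eq
    intro a b
    have h1 : Tendsto (fun i => dist (g i a) (g i b)) (U : Filter ι)
        (𝓝 (dist (φ a) (φ b))) := (hφ a).dist (hφ b)
    have h2 : (fun i => dist (g i a) (g i b)) = fun _ => dist a b :=
      funext fun i => (g i).dist_eq a b
    rw [h2] at h1
    exact tendsto_nhds_unique h1 tendsto_const_nhds
  set h0 : X ≃ᵢ X := ⟨⟨φ, ψ, hli, hri⟩, hiso⟩ with hh0
  have htend : Tendsto g (U : Filter ι) (𝓝 h0) := by
    rw [show (𝓝 h0) = comap (fun e : X ≃ᵢ X => (e : X → X)) (𝓝 (h0 : X → X)) from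
      nhds_induced _ _, tendsto_comap_iff, tendsto_pi_nhds]
    intro y
    exact hφ y
  have hcl : MapClusterPt h0 atTop g := by
    show ClusterPt h0 (map g atTop)
    show (𝓝 h0 ⊓ map g atTop).NeBot
    exact neBot_of_le (f := map g (U : Filter ι)) (le_inf htend (map_mono hU))
  exact hg h0 hcl

/-- An auxiliary index type of pairs, ordered by the first component. -/
private structure PairIdx {ι : Type*} (P : ι → ι → Prop) where
  a : ι
  b : ι
  hp : P a b

private instance {ι : Type*} [Preorder ι] (P : ι → ι → Prop) : Preorder (PairIdx P) :=
  Preorder.lift PairIdx.a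

/-- Tail approximation relative to the stabilizer of `x`, for a net whose `x`-orbit
is merely Cauchy. -/
private lemma tail_approx (hP : IsoProperLimits X)
    {ι : Type*} [Nonempty ι] [Preorder ι] [IsDirected ι (· ≤ ·)]
    {g : ι → X ≃ᵢ X} {x : X}
    (hx : Cauchy (map (fun i => g i x) atTop)) (y : X) :
    ∀ ε > 0, ∃ i0 : ι, ∀ i, i0 ≤ i →
      ∃ h : X ≃ᵢ X, h x = x ∧ dist (g i y) (g i0 (h y)) < ε := by
  intro ε hε
  by_contra hbad
  push_neg at hbad
  let J := PairIdx (fun i j : ι => i ≤ j ∧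
    ∀ h : X ≃ᵢ X, h x = x → ε ≤ dist (g j y) (g i (h y)))
  have hJ : ∀ i0 : ι, ∃ p : J, i0 ≤ p.a := by
    intro i0
    obtain ⟨i, hi1, hi2⟩ := hbad i0
    exact ⟨⟨i0, i, hi1, hi2⟩, le_refl i0⟩
  haveI : Nonempty J := by
    obtain ⟨p, -⟩ := hJ (Classical.arbitrary ι)
    exact ⟨p⟩
  haveI : IsDirected J (· ≤ ·) := ⟨fun p q => by
    obtain ⟨c, hc1, hc2⟩ := directed_of (· ≤ ·) p.a q.a
    obtain ⟨r, hr⟩ := hJ c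
    refine ⟨r, ?_, ?_⟩
    · show p.a ≤ r.a
      exact le_trans hc1 hr
    · show q.a ≤ r.a
      exact le_trans hc2 hr⟩
  let u : J → X ≃ᵢ X := fun p => (g p.b).trans (g p.a).symm
  have hux : ∀ p : J, u p x = (g p.a).symm (g p.b x) := fun p => rfl
  have huy : ∀ p : J, u p y = (g p.a).symm (g p.b y) := fun p => rfl
  have hut : Tendsto (fun p : J => u p x) atTop (𝓝 x) := by
    rw [Metric.tendsto_nhds]
    intro δ hδ
    obtain ⟨-, hC⟩ := Metric.cauchy_iff.1 hx
    obtain ⟨t, ht, hts⟩ := hC δ hδ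
    rw [mem_map, mem_atTop_sets] at ht
    obtain ⟨i1, hi1⟩ := ht
    obtain ⟨p0, hp0⟩ := hJ i1
    filter_upwards [Ici_mem_atTop p0] with p hp
    have h1 : i1 ≤ p.a := le_trans hp0 (show p0.a ≤ p.a from hp)
    have h2 : i1 ≤ p.b := le_trans h1 p.hp.1
    have e : dist (u p x) x = dist (g p.b x) (g p.a x) := by
      rw [hux, dist_symm_apply]
    rw [e]
    exact hts _ (hi1 _ h2) _ (hi1 _ h1)
  have hudiv : DivergentNet u := by
    intro h hcl
    have hhx : h x = x := clusterPt_eq_of_tendsto (mapClusterPt_eval hcl x) hut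
    have hCclosed : IsClosed {z : X | ∀ kk : X ≃ᵢ X, kk x = x → ε ≤ dist z (kk y)} := by
      have : {z : X | ∀ kk : X ≃ᵢ X, kk x = x → ε ≤ dist z (kk y)} =
          ⋂ (kk : X ≃ᵢ X) (_ : kk x = x), {z : X | ε ≤ dist z (kk y)} := by
        ext z; simp
      rw [this]
      exact isClosed_iInter fun kk => isClosed_iInter fun _ =>
        isClosed_le continuous_const (continuous_id.dist continuous_const)
    have hy' : h y ∈ {z : X | ∀ kk : X ≃ᵢ X, kk x = x → ε ≤ dist z (kk y)} := by
      refine clusterPt_mem_closed hCclosed ?_ (mapClusterPt_eval hcl y)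
      intro p kk hkk
      have hp := p.hp.2 kk hkk
      have e2 : dist (u p y) (kk y) = dist (g p.b y) (g p.a (kk y)) := by
        rw [huy, dist_symm_apply]
      rw [e2]
      exact hp
    have := hy' h hhx
    rw [dist_self] at this
    linarith
  exact proper_nets hP hudiv hut

private lemma finite_tail (hP : IsoProperLimits X)
    {ι : Type*} [Nonempty ι] [Preorder ι] [IsDirected ι (· ≤ ·)]
    {g : ι → X ≃ᵢ X} {x : X}
    (hx : Cauchy (map (fun i => g i x) atTop)) (y : X) :
    ∀ ε > 0, ∃ (s : Finset X) (i0 : ι), ∀ i, i0 ≤ i →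
      ∃ c ∈ s, dist (g i y) (g i0 c) < ε := by
  intro ε hε
  obtain ⟨t, ht⟩ := stab_finite_net hP x x y (ε / 2) (by linarith)
  obtain ⟨i0, hi0⟩ := tail_approx hP hx y (ε / 2) (by linarith)
  refine ⟨t, i0, fun i hi => ?_⟩
  obtain ⟨h, hhx, hh⟩ := hi0 i hi
  obtain ⟨c, hc, hc2⟩ := ht h hhx
  refine ⟨c, hc, ?_⟩
  have e : dist (g i0 (h y)) (g i0 c) = dist (h y) c := (g i0).dist_eq _ _
  calc dist (g i y) (g i0 c) ≤ dist (g i y) (g i0 (h y)) + dist (g i0 (h y)) (g i0 c) :=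
        dist_triangle _ _ _
    _ < ε / 2 + ε / 2 := by rw [e]; exact add_lt_add hh hc2
    _ = ε := by ring

private lemma ultra_cauchy (hP : IsoProperLimits X)
    {ι : Type*} [Nonempty ι] [Preorder ι] [IsDirected ι (· ≤ ·)]
    {g : ι → X ≃ᵢ X} {x : X}
    (hx : Cauchy (map (fun i => g i x) atTop)) (y : X)
    (U : Ultrafilter (Completion X))
    (hU : (U : Filter (Completion X)) ≤ map (fun i => ((g i y : X) : Completion X)) atTop) :
    Cauchy (U : Filter (Completion X)) := by
  rw [Metric.cauchy_iff]
  refine ⟨U.neBot', fun ε hε => ?_⟩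
  obtain ⟨s, i0, hs⟩ := finite_tail hP hx y (ε / 3) (by linarith)
  have hmem : (⋃ c ∈ (s : Set X), Metric.ball ((g i0 c : X) : Completion X) (ε / 3)) ∈ U := by
    apply hU
    rw [mem_map]
    apply mem_of_superset (Ici_mem_atTop i0)
    intro i hi
    obtain ⟨c, hc, hc2⟩ := hs i hi
    simp only [Set.mem_preimage, Set.mem_iUnion, Metric.mem_ball]
    exact ⟨c, hc, by rwa [Completion.dist_eq]⟩
  obtain ⟨c, hc, hcU⟩ := (Ultrafilter.finite_biUnion_mem_iff s.finite_toSet).1 hmem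
  refine ⟨Metric.ball ((g i0 c : X) : Completion X) (ε / 3), hcU, fun a ha b hb => ?_⟩
  rw [Metric.mem_ball] at ha hb
  calc dist a b ≤ dist a ((g i0 c : X) : Completion X) + dist ((g i0 c : X) : Completion X) b :=
        dist_triangle _ _ _
    _ < ε / 3 + ε / 3 := add_lt_add ha (by rw [dist_comm]; exact hb)
    _ < ε := by linarith

/-- Auxiliary increasing escalation of a sequence of indices in a directed preorder. -/
private noncomputable def escal {ι : Type*} [Preorder ι] [IsDirected ι (· ≤ ·)]
    (thr : ℕ → ι) : ℕ → ι
  | 0 => thr 0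
  | n + 1 => (directed_of (· ≤ ·) (escal thr n) (thr (n + 1))).choose

private lemma escal_mono {ι : Type*} [Preorder ι] [IsDirected ι (· ≤ ·)]
    (thr : ℕ → ι) : Monotone (escal thr) :=
  monotone_nat_of_le_succ fun n =>
    (directed_of (· ≤ ·) (escal thr n) (thr (n + 1))).choose_spec.1

private lemma le_escal {ι : Type*} [Preorder ι] [IsDirected ι (· ≤ ·)]
    (thr : ℕ → ι) : ∀ n, thr n ≤ escal thr n
  | 0 => le_refl _
  | n + 1 => (directed_of (· ≤ ·) (escal thr n) (thr (n + 1))).choose_spec.2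

/-- Interleaving construction: from a divergent net Cauchy at `x` with two cluster
points of the `y`-orbit in the completion, produce a divergent *sequence* with the
same two cluster points. -/
private lemma interleave (hP : IsoProperLimits X)
    {ι : Type*} [Nonempty ι] [Preorder ι] [IsDirected ι (· ≤ ·)]
    {g : ι → X ≃ᵢ X} (hg : DivergentNet g) {x : X}
    (hx : Cauchy (map (fun i => g i x) atTop)) {y : X} {z w : Completion X}
    (hz : MapClusterPt z atTop (fun i => ((g i y : X) : Completion X)))
    (hw : MapClusterPt w atTop (fun i => ((g i y : X) : Completion X))) :
    ∃ s : ℕ → X ≃ᵢ X, DivergentNet s ∧ Cauchy (map (fun n => s n x) atTop) ∧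
      MapClusterPt z atTop (fun n => ((s n y : X) : Completion X)) ∧
      MapClusterPt w atTop (fun n => ((s n y : X) : Completion X)) := by
  haveI : (atTop : Filter ι).NeBot := atTop_neBot
  have hcx : Cauchy (map (fun i => ((g i x : X) : Completion X)) atTop) := by
    have h1 := hx.map (Completion.uniformContinuous_coe X)
    rwa [map_map] at h1
  obtain ⟨xhat, hxhat⟩ := CompleteSpace.complete hcx
  have hxhat' : Tendsto (fun i => ((g i x : X) : Completion X)) atTop (𝓝 xhat) := hxhat
  have hthr : ∀ n : ℕ, ∃ mm : ι, ∀ i, mm ≤ i →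
      dist ((g i x : X) : Completion X) xhat < 1 / ((n : ℝ) + 1) := by
    intro n
    have h1 := Metric.tendsto_nhds.1 hxhat' (1 / ((n : ℝ) + 1)) (by positivity)
    rw [eventually_atTop] at h1
    obtain ⟨mm, hmm⟩ := h1
    exact ⟨mm, fun i hi => hmm i hi⟩
  choose thr hthr using hthr
  set m : ℕ → ι := escal thr with hmdef
  have hmx : ∀ n, ∀ i, m n ≤ i →
      dist ((g i x : X) : Completion X) xhat < 1 / ((n : ℝ) + 1) :=
    fun n i hi => hthr n i (le_trans (le_escal thr n) hi)
  have hsel : ∀ ξ : Completion X,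
      MapClusterPt ξ atTop (fun i => ((g i y : X) : Completion X)) →
      ∀ n : ℕ, ∃ i, m n ≤ i ∧ dist ((g i y : X) : Completion X) ξ < 1 / ((n : ℝ) + 1) := by
    intro ξ hξ n
    have hfreq := (mapClusterPt_iff_frequently.1 hξ) (Metric.ball ξ (1 / ((n : ℝ) + 1)))
      (Metric.ball_mem_nhds _ (by positivity))
    obtain ⟨i, hi1, hi2⟩ := (hfreq.and_eventually (Ici_mem_atTop (m n))).exists
    exact ⟨i, hi2, Metric.mem_ball.1 hi1⟩
  choose a ha1 ha2 using hsel z hz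
  choose b hb1 hb2 using hsel w hw
  set c : ℕ → ι := fun n => if Even n then a (n / 2) else b (n / 2) with hcdef
  have hcm : ∀ n, m (n / 2) ≤ c n := by
    intro n
    by_cases h : Even n
    · simp only [hcdef, if_pos h]; exact ha1 _
    · simp only [hcdef, if_neg h]; exact hb1 _
  set s : ℕ → X ≃ᵢ X := fun n => g (c n) with hsdef
  have hsx : Tendsto (fun n => ((s n x : X) : Completion X)) atTop (𝓝 xhat) := by
    rw [Metric.tendsto_nhds]
    intro δ hδ
    obtain ⟨N, hN⟩ := exists_nat_one_div_lt hδ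
    filter_upwards [eventually_ge_atTop (2 * N)] with n hn
    have h2 : N ≤ n / 2 := by omega
    have h3 := hmx (n / 2) (c n) (hcm n)
    have hle : 1 / (((n / 2 : ℕ) : ℝ) + 1) ≤ 1 / ((N : ℝ) + 1) :=
      one_div_le_one_div_of_le (by positivity) (by exact_mod_cast Nat.succ_le_succ h2)
    calc dist ((s n x : X) : Completion X) xhat < 1 / (((n / 2 : ℕ) : ℝ) + 1) := h3
      _ ≤ 1 / ((N : ℝ) + 1) := hle
      _ < δ := hN
  have hsxc : Cauchy (map (fun n => s n x) atTop) := by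
    have hc1 : Cauchy (map (fun n => ((s n x : X) : Completion X)) atTop) :=
      Cauchy.mono cauchy_nhds hsx
    have hc2 : Cauchy (map ((↑) : X → Completion X) (map (fun n => s n x) atTop)) := by
      rw [map_map]; exact hc1
    exact (Completion.isUniformInducing_coe X).cauchy_map_iff.1 hc2
  have hparity : ∀ M : ℕ, c (2 * M) = a M ∧ c (2 * M + 1) = b M := by
    intro M
    constructor
    · have he : Even (2 * M) := even_two_mul M
      have hdiv2 : 2 * M / 2 = M := by omega
      rw [hcdef]
      simp only [if_pos he, hdiv2]
    · have ho : ¬ Even (2 * M + 1) := by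
        rw [Nat.even_add_one]
        exact not_not_intro (even_two_mul M)
      have hdiv2 : (2 * M + 1) / 2 = M := by omega
      rw [hcdef]
      simp only [if_neg ho, hdiv2]
  have hz' : MapClusterPt z atTop (fun n => ((s n y : X) : Completion X)) := by
    rw [mapClusterPt_iff_frequently]
    intro S hS
    obtain ⟨ε, hε, hball⟩ := Metric.mem_nhds_iff.1 hS
    obtain ⟨N, hN⟩ := exists_nat_one_div_lt hε
    rw [frequently_atTop]
    intro N0
    have hMN : N ≤ max N N0 := le_max_left N N0
    have hMN0 : N0 ≤ max N N0 := le_max_right N N0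
    refine ⟨2 * max N N0, by omega, ?_⟩
    apply hball
    rw [Metric.mem_ball]
    have h1 : dist ((g (a (max N N0)) y : X) : Completion X) z
        < 1 / (((max N N0 : ℕ) : ℝ) + 1) := ha2 (max N N0)
    have h2 : (1 : ℝ) / (((max N N0 : ℕ) : ℝ) + 1) ≤ 1 / ((N : ℝ) + 1) :=
      one_div_le_one_div_of_le (by positivity) (by exact_mod_cast Nat.succ_le_succ hMN)
    have h3 : ((s (2 * max N N0) y : X) : Completion X)
        = ((g (a (max N N0)) y : X) : Completion X) := by
      rw [hsdef]
      simp only []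
      rw [(hparity (max N N0)).1]
    rw [h3]
    linarith
  have hw' : MapClusterPt w atTop (fun n => ((s n y : X) : Completion X)) := by
    rw [mapClusterPt_iff_frequently]
    intro S hS
    obtain ⟨ε, hε, hball⟩ := Metric.mem_nhds_iff.1 hS
    obtain ⟨N, hN⟩ := exists_nat_one_div_lt hε
    rw [frequently_atTop]
    intro N0
    have hMN : N ≤ max N N0 := le_max_left N N0
    have hMN0 : N0 ≤ max N N0 := le_max_right N N0
    refine ⟨2 * max N N0 + 1, by omega, ?_⟩
    apply hball
    rw [Metric.mem_ball]
    have h1 : dist ((g (b (max N N0)) y : X) : Completion X) w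
        < 1 / (((max N N0 : ℕ) : ℝ) + 1) := hb2 (max N N0)
    have h2 : (1 : ℝ) / (((max N N0 : ℕ) : ℝ) + 1) ≤ 1 / ((N : ℝ) + 1) :=
      one_div_le_one_div_of_le (by positivity) (by exact_mod_cast Nat.succ_le_succ hMN)
    have h3 : ((s (2 * max N N0 + 1) y : X) : Completion X)
        = ((g (b (max N N0)) y : X) : Completion X) := by
      rw [hsdef]
      simp only []
      rw [(hparity (max N N0)).2]
    rw [h3]
    linarith
  have hsdiv : DivergentNet s := by
    intro h hcl
    have h1 : MapClusterPt ((h x : X) : Completion X) atTop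
        (fun n => ((s n x : X) : Completion X)) :=
      MapClusterPt.continuousAt_comp ((Completion.continuous_coe X).continuousAt)
        (mapClusterPt_eval hcl x)
    have h2 : ((h x : X) : Completion X) = xhat := clusterPt_eq_of_tendsto h1 hsx
    have h3 : Tendsto (fun i => ((g i x : X) : Completion X)) atTop
        (𝓝 ((h x : X) : Completion X)) := by
      rw [h2]; exact hxhat'
    have h4 : Tendsto (fun i => g i x) atTop (𝓝 (h x)) :=
      ((Completion.isUniformInducing_coe X).isInducing.tendsto_nhds_iff).2 h3
    exact proper_nets hP hg h4
  exact ⟨s, hsdiv, hsxc, hz', hw'⟩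

end AuxProofCI

/-- For a proper action `(Iso(X), X)`: the action is Cauchy-indivisible iff for every
net `(g_i)` in `Iso(X)` with no convergent subnet such that `(g_i x)` is Cauchy for
some `x`, and for every `y ∈ X`, the net `(g_i y)` has at most one cluster point in
the completion `X̂`. -/
theorem isoCauchyIndivisible_iff_at_most_one_clusterPt (X : Type*) [MetricSpace X]
    (hP : IsoProperLimits X) :
    IsoCauchyIndivisible X ↔
      ∀ (ι : Type*) [Nonempty ι] [Preorder ι] [IsDirected ι (· ≤ ·)],
        ∀ g : ι → X ≃ᵢ X, DivergentNet g →
          (∃ x : X, Cauchy (map (fun i => g i x) atTop)) →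
          ∀ (y : X) (z w : Completion X),
            MapClusterPt z atTop (fun i => ((g i y : X) : Completion X)) →
            MapClusterPt w atTop (fun i => ((g i y : X) : Completion X)) → z = w := by
  constructor
  · -- Cauchy-indivisible implies uniqueness of cluster points
    intro h1 ι _ _ _ g hg hex y z w hz hw
    obtain ⟨x, hx⟩ := hex
    obtain ⟨s, hsdiv, hsx, hz', hw'⟩ := interleave hP hg hx hz hw
    have hcy : Cauchy (map (fun n => s n y) atTop) := by
      rw [← lift_map_eq (fun n => s n y)]
      exact h1 (ULift ℕ) (fun l => s l.down) (lift_divergent hsdiv)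
        ⟨x, lift_cauchy hsx⟩ y
    have hcc : Cauchy (map (fun n => ((s n y : X) : Completion X)) atTop) := by
      have h2 := hcy.map (Completion.uniformContinuous_coe X)
      rwa [map_map] at h2
    obtain ⟨l, hl⟩ := CompleteSpace.complete hcc
    have hl' : Tendsto (fun n => ((s n y : X) : Completion X)) atTop (𝓝 l) := hl
    exact (clusterPt_eq_of_tendsto hz' hl').trans (clusterPt_eq_of_tendsto hw' hl').symm
  · -- uniqueness of cluster points implies Cauchy-indivisible
    intro H ι _ _ _ g hg hex y
    obtain ⟨x, hx⟩ := hex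
    have huniq : ∀ z w : Completion X,
        MapClusterPt z atTop (fun i => ((g i y : X) : Completion X)) →
        MapClusterPt w atTop (fun i => ((g i y : X) : Completion X)) → z = w := by
      intro z w hz hw
      obtain ⟨s, hsdiv, hsx, hz', hw'⟩ := interleave hP hg hx hz hw
      exact H (ULift ℕ) (fun l => s l.down) (lift_divergent hsdiv)
        ⟨x, lift_cauchy hsx⟩ y z w (lift_clusterPt hz') (lift_clusterPt hw')
    set f : ι → Completion X := fun i => ((g i y : X) : Completion X) with hf
    haveI : (atTop : Filter ι).NeBot := atTop_neBot
    haveI hFne : (map f atTop).NeBot := map_neBot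
    have key : ∀ F' : Filter (Completion X), F'.NeBot → F' ≤ map f atTop →
        ∃ z, (𝓝 z ⊓ F').NeBot ∧ MapClusterPt z atTop f := by
      intro F' hne hle
      haveI := hne
      obtain ⟨z, hz⟩ := CompleteSpace.complete
        (ultra_cauchy hP hx y (Ultrafilter.of F') ((Ultrafilter.of_le F').trans hle))
      refine ⟨z, ?_, ?_⟩
      · exact Filter.neBot_of_le (f := (Ultrafilter.of F' : Filter (Completion X)))
          (le_inf hz (Ultrafilter.of_le F'))
      · exact Filter.neBot_of_le (f := (Ultrafilter.of F' : Filter (Completion X)))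
          (le_inf hz ((Ultrafilter.of_le F').trans hle))
    obtain ⟨z, -, hz⟩ := key (map f atTop) hFne le_rfl
    have htd : Tendsto f atTop (𝓝 z) := by
      by_contra hnot
      rw [Metric.tendsto_nhds] at hnot
      push_neg at hnot
      obtain ⟨δ, hδ, hfr⟩ := hnot
      have hfr' : ∃ᶠ p in map f atTop, p ∈ {p : Completion X | δ ≤ dist p z} := by
        rw [frequently_map]
        exact hfr.mono (fun i hi => hi)
      have hne' : (map f atTop ⊓ 𝓟 {p : Completion X | δ ≤ dist p z}).NeBot :=
        frequently_iff_neBot.1 hfr'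
      obtain ⟨w, hwne, hw⟩ := key (map f atTop ⊓ 𝓟 {p : Completion X | δ ≤ dist p z})
        hne' inf_le_left
      have hwC : w ∈ {p : Completion X | δ ≤ dist p z} := by
        have h1 : (𝓝 w ⊓ 𝓟 {p : Completion X | δ ≤ dist p z}).NeBot :=
          hwne.mono (inf_le_inf_left _ inf_le_right)
        have hcl : w ∈ closure {p : Completion X | δ ≤ dist p z} :=
          mem_closure_iff_clusterPt.2 h1
        have hCc : IsClosed {p : Completion X | δ ≤ dist p z} :=
          isClosed_le continuous_const (continuous_id.dist continuous_const)
        rwa [hCc.closure_eq] at hcl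
      have hzw : z = w := huniq z w hz hw
      rw [← hzw] at hwC
      simp only [Set.mem_setOf_eq, dist_self] at hwC
      linarith
    have hCau : Cauchy (map f atTop) := Cauchy.mono cauchy_nhds htd
    have hCau2 : Cauchy (map ((↑) : X → Completion X) (map (fun i => g i y) atTop)) := by
      rwa [map_map]
    exact (Completion.isUniformInducing_coe X).cauchy_map_iff.1 hCau2

end
end

section
/- Let (X,d) be a separable metric space. If for every sequence {g_n} in Iso(X) with no convergent subsequence in Iso(X) such that {g_n x} is a Cauchy sequence for some x ∈ X, the sequence {g_n x} is Cauchy for every x ∈ X, then the action (Iso(X),X) is Cauchy-indivisible (i.e., the same conclusion holds for arbitrary nets in place of sequences). -/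
open Filter Topology Set UniformSpace

noncomputable section

/-- A countable family of open sets in `Iso(X)` refining every neighborhood. -/
lemma exists_open_refining_family (X : Type*) [MetricSpace X]
    [TopologicalSpace.SeparableSpace X] [Nonempty X] :
    ∃ W : ℕ → Set (X ≃ᵢ X), (∀ n, IsOpen (W n)) ∧
      ∀ (h : X ≃ᵢ X), ∀ U ∈ 𝓝 h, ∃ n, h ∈ W n ∧ W n ⊆ U := by
  obtain ⟨u, hu⟩ := TopologicalSpace.exists_dense_seq X
  set V : List (ℕ × ℕ × ℚ) → Set (X ≃ᵢ X) := fun L =>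
    {f | ∀ pr ∈ L, dist (f (u pr.1)) (u pr.2.1) < (pr.2.2 : ℝ)} with hV
  obtain ⟨e, he⟩ := exists_surjective_nat (List (ℕ × ℕ × ℚ))
  refine ⟨fun n => V (e n), ?_, ?_⟩
  · intro n
    show IsOpen (V (e n))
    have h1 : V (e n) = ⋂ pr ∈ {pr | pr ∈ e n},
        {f : X ≃ᵢ X | dist (f (u pr.1)) (u pr.2.1) < (pr.2.2 : ℝ)} := by
      ext f; simp [hV]
    rw [h1]
    refine (List.finite_toSet (e n)).isOpen_biInter fun pr _ => ?_
    have hc : Continuous fun f : X ≃ᵢ X => f (u pr.1) :=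
      (continuous_apply (u pr.1)).comp continuous_induced_dom
    exact isOpen_lt (hc.dist continuous_const) continuous_const
  · intro h U hU
    rw [nhds_induced] at hU
    obtain ⟨Vs, hVs, hVsU⟩ := Filter.mem_comap.mp hU
    rw [nhds_pi, Filter.mem_pi] at hVs
    obtain ⟨I, hIfin, t, ht, htV⟩ := hVs
    have hε : ∀ z : X, ∃ ε : ℝ, 0 < ε ∧ (z ∈ I → Metric.ball (h z) ε ⊆ t z) := by
      intro z
      by_cases hz : z ∈ I
      · obtain ⟨ε, hε, hb⟩ := Metric.mem_nhds_iff.mp (ht z)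
        exact ⟨ε, hε, fun _ => hb⟩
      · exact ⟨1, one_pos, fun hz' => absurd hz' hz⟩
    choose εf hεpos hεball using hε
    have sel : ∀ z : X, ∃ pr : ℕ × ℕ × ℚ, dist (u pr.1) z < εf z / 8 ∧
        dist (u pr.2.1) (h (u pr.1)) < εf z / 8 ∧
        εf z / 8 < (pr.2.2 : ℝ) ∧ (pr.2.2 : ℝ) < εf z / 4 := by
      intro z
      obtain ⟨q, hq⟩ := hu.exists_dist_lt z (by have := hεpos z; linarith : (0:ℝ) < εf z / 8)
      obtain ⟨p, hp⟩ := hu.exists_dist_lt (h (u q)) (by have := hεpos z; linarith : (0:ℝ) < εf z / 8)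
      obtain ⟨r, hr1, hr2⟩ := exists_rat_btwn
        (by linarith [hεpos z] : εf z / 8 < εf z / 4)
      exact ⟨(q, p, r), by rwa [dist_comm], by rwa [dist_comm], hr1, hr2⟩
    choose sel hsel1 hsel2 hsel3 hsel4 using sel
    set L : List (ℕ × ℕ × ℚ) := hIfin.toFinset.toList.map sel with hL
    obtain ⟨n, hn⟩ := he L
    refine ⟨n, ?_, ?_⟩
    · show h ∈ V (e n)
      rw [hn]
      intro pr hpr
      simp only [hL, List.mem_map, Finset.mem_toList, Set.Finite.mem_toFinset] at hpr
      obtain ⟨z, _, rfl⟩ := hpr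
      calc dist (h (u (sel z).1)) (u (sel z).2.1)
          = dist (u (sel z).2.1) (h (u (sel z).1)) := dist_comm _ _
        _ < εf z / 8 := hsel2 z
        _ < ((sel z).2.2 : ℝ) := hsel3 z
    · show V (e n) ⊆ U
      rw [hn]
      intro f hf
      apply hVsU
      apply htV
      intro z hz
      have hmem : sel z ∈ L := by
        simp only [hL, List.mem_map, Finset.mem_toList, Set.Finite.mem_toFinset]
        exact ⟨z, hz, rfl⟩
      have hfd : dist (f (u (sel z).1)) (u (sel z).2.1) < ((sel z).2.2 : ℝ) := hf _ hmem
      have key : dist (f z) (h z) < εf z := by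
        have h1 : dist (f z) (f (u (sel z).1)) = dist z (u (sel z).1) := f.dist_eq _ _
        have h2 : dist (h (u (sel z).1)) (h z) = dist (u (sel z).1) z := h.dist_eq _ _
        have := dist_triangle4 (f z) (f (u (sel z).1)) (u (sel z).2.1) (h z)
        have h3 : dist (u (sel z).2.1) (h z) ≤
            dist (u (sel z).2.1) (h (u (sel z).1)) + dist (h (u (sel z).1)) (h z) :=
          dist_triangle _ _ _
        have h4 := hsel1 z
        have h5 := hsel2 z
        have h6 := hsel4 z
        rw [dist_comm z (u (sel z).1)] at h1
        rw [h1] at this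
        rw [h2] at h3
        linarith [this, h3, hfd, h4, h5, h6, hsel3 z]
      exact hεball z hz (Metric.mem_ball.mpr key)


/-- For a separable metric space, the sequential form of Cauchy-indivisibility for the
evaluation action of `Iso(X)` implies the full (net) form. -/
theorem isoCauchyIndivisible_of_seq (X : Type*) [MetricSpace X]
    [TopologicalSpace.SeparableSpace X]
    (hseq : ∀ g : ℕ → X ≃ᵢ X, DivergentSeq g →
      (∃ x : X, CauchySeq fun n => g n x) → ∀ y : X, CauchySeq fun n => g n y) :
    IsoCauchyIndivisible X := by
  intro ι _ _ _ g hdiv hex y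
  obtain ⟨x, hx⟩ := hex
  have hNX : Nonempty X := ⟨y⟩
  by_contra hy
  obtain ⟨W, hWopen, hWbasis⟩ := exists_open_refining_family X
  -- tail-avoidance of some family member, from divergence of the net
  have havoid : ∀ h : X ≃ᵢ X, ∃ n, h ∈ W n ∧ ∃ i, ∀ j, i ≤ j → g j ∉ W n := by
    intro h
    have hdh := hdiv h
    rw [mapClusterPt_iff_frequently] at hdh
    push_neg at hdh
    obtain ⟨s, hs, hev⟩ := hdh
    obtain ⟨n, hn, hsub⟩ := hWbasis h s hs
    have hev : ∀ᶠ j in (atTop : Filter ι), g j ∉ s := hev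
    obtain ⟨i, hi⟩ := eventually_atTop.mp hev
    exact ⟨n, hn, i, fun j hj hmem => hi j hj (hsub hmem)⟩
  -- tail-avoidance witnesses
  have hPex : ∀ n : ℕ, ∃ i : ι,
      (∃ i', ∀ j, i' ≤ j → g j ∉ W n) → ∀ j, i ≤ j → g j ∉ W n := by
    intro n
    by_cases hn : ∃ i', ∀ j, i' ≤ j → g j ∉ W n
    · obtain ⟨i, hi⟩ := hn; exact ⟨i, fun _ => hi⟩
    · exact ⟨Classical.arbitrary ι, fun hc => absurd hc hn⟩
  choose J hJ using hPex
  -- Cauchy indices for x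
  have hCex : ∀ n : ℕ, ∃ i : ι, ∀ j, i ≤ j → ∀ k, i ≤ k →
      dist (g j x) (g k x) < 1 / (n + 1 : ℝ) := by
    intro n
    obtain ⟨-, H⟩ := Metric.cauchy_iff.mp hx
    obtain ⟨t, ht, hdist⟩ := H (1 / (n + 1 : ℝ)) (by positivity)
    have ht' : ∀ᶠ j in (atTop : Filter ι), g j x ∈ t := mem_map.mp ht
    obtain ⟨i, hi⟩ := eventually_atTop.mp ht'
    exact ⟨i, fun j hj k hk => hdist _ (hi j hj) _ (hi k hk)⟩
  choose C hC using hCex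
  -- non-Cauchy gap for y
  have hyε : ∃ ε > 0, ∀ i : ι, ∃ j k : ι, i ≤ j ∧ i ≤ k ∧
      ε ≤ dist (g j y) (g k y) := by
    by_contra hcon
    push_neg at hcon
    apply hy
    have hbot : (atTop : Filter ι).NeBot := atTop_neBot_iff.mpr ⟨‹_›, ‹_›⟩
    rw [Metric.cauchy_iff]
    refine ⟨map_neBot, fun ε hε => ?_⟩
    obtain ⟨i, hi⟩ := hcon ε hε
    refine ⟨(fun i => g i y) '' Set.Ici i, ?_, ?_⟩
    · exact mem_map.mpr (mem_of_superset (Ici_mem_atTop i) fun j hj => ⟨j, hj, rfl⟩)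
    · rintro p ⟨j, hj, rfl⟩ q ⟨k, hk, rfl⟩
      exact hi j k hj hk
  obtain ⟨ε, hε, hsep⟩ := hyε
  choose A B hA hB hAB using hsep
  -- directedness upper bounds
  have hub : ∀ a b : ι, ∃ c, a ≤ c ∧ b ≤ c := fun a b => directed_of (· ≤ ·) a b
  choose ub hub1 hub2 using hub
  -- the increasing index sequence
  let I : ℕ → ι := fun n => Nat.rec (C 0) (fun m Im => ub (ub Im (C (m + 1))) (J m)) n
  have hIstep : ∀ n, I n ≤ I (n + 1) := fun n =>
    le_trans (hub1 (I n) (C (n + 1))) (hub1 _ (J n))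
  have hImono : Monotone I := monotone_nat_of_le_succ hIstep
  have hCI : ∀ n, C n ≤ I n := by
    intro n
    cases n with
    | zero => exact le_refl _
    | succ m => exact le_trans (hub2 (I m) (C (m + 1))) (hub1 _ (J m))
  have hJI : ∀ n, J n ≤ I (n + 1) := fun n => hub2 _ (J n)
  -- the interleaved sequence
  let c : ℕ → ι := fun n => if Even n then A (I (n / 2)) else B (I (n / 2))
  let G : ℕ → X ≃ᵢ X := fun n => g (c n)
  have hcI : ∀ n, I (n / 2) ≤ c n := by
    intro n
    by_cases h : Even n
    · simpa [c, if_pos h] using hA (I (n / 2))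
    · simpa [c, if_neg h] using hB (I (n / 2))
  have hGx : CauchySeq fun n => G n x := by
    rw [Metric.cauchySeq_iff]
    intro δ hδ
    obtain ⟨M, hM⟩ := exists_nat_one_div_lt hδ
    refine ⟨2 * M, fun m hm n hn => ?_⟩
    have h1 : I M ≤ c m := le_trans (hImono (by omega : M ≤ m / 2)) (hcI m)
    have h2 : I M ≤ c n := le_trans (hImono (by omega : M ≤ n / 2)) (hcI n)
    exact lt_trans (hC M (c m) (le_trans (hCI M) h1) (c n) (le_trans (hCI M) h2)) hM
  have hGy : ¬ CauchySeq fun n => G n y := by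
    rw [Metric.cauchySeq_iff]
    push_neg
    refine ⟨ε, hε, fun N => ⟨2 * N, by omega, 2 * N + 1, by omega, ?_⟩⟩
    have hev : Even (2 * N) := even_two_mul N
    have hodd : ¬ Even (2 * N + 1) := by
      rw [Nat.even_add_one]; exact not_not_intro (even_two_mul N)
    have e1 : (2 * N) / 2 = N := by omega
    have e2 : (2 * N + 1) / 2 = N := by omega
    have hc1 : c (2 * N) = A (I N) := by simp only [c, if_pos hev, e1]
    have hc2 : c (2 * N + 1) = B (I N) := by simp only [c, if_neg hodd, e2]
    show ε ≤ dist (g (c (2 * N)) y) (g (c (2 * N + 1)) y)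
    rw [hc1, hc2]
    exact hAB (I N)
  -- the sequence is not divergent
  have hnd : ¬ DivergentSeq G := fun hd => hGy (hseq G hd ⟨x, hGx⟩ y)
  rw [DivergentSeq] at hnd
  push_neg at hnd
  obtain ⟨φ, hφ, h, hten⟩ := hnd
  -- final contradiction
  obtain ⟨n₀, hmem, hPn⟩ := havoid h
  have hJspec := hJ n₀ hPn
  have hWn : W n₀ ∈ 𝓝 h := (hWopen n₀).mem_nhds hmem
  have hevW : ∀ᶠ k in (atTop : Filter ℕ), (G ∘ φ) k ∈ W n₀ := hten hWn
  obtain ⟨K, hK⟩ := eventually_atTop.mp hevW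
  set k := max K (2 * n₀ + 2) with hk
  have h1 : G (φ k) ∈ W n₀ := hK k (le_max_left _ _)
  have h2 : 2 * n₀ + 2 ≤ φ k := le_trans (le_max_right _ _) hφ.le_apply
  have h3 : n₀ + 1 ≤ φ k / 2 := by omega
  have h4 : J n₀ ≤ c (φ k) := le_trans (hJI n₀) (le_trans (hImono h3) (hcI _))
  exact hJspec _ h4 h1


end
end

section
/- Let (X,d) be a separable metric space such that the action (Iso(X),X) is Cauchy-indivisible, and let {g_n} be a sequence in Iso(X) with no convergent subsequence in Iso(X) such that {g_n x} is a Cauchy sequence in X for some x ∈ X. Then: (i) {g_n x_n} is a Cauchy sequence in X for every Cauchy sequence {x_n} in X; (ii) for every Cauchy sequence {x_k} in X, the sequence {ĝ_n [x_k]} converges in X̂ to [g_k x_k]. -/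
open Filter Topology Set UniformSpace

noncomputable section

/-- `ULift ℕ ≃o ℕ`, to feed `ℕ`-indexed nets to universe-polymorphic hypotheses. -/
def uliftNatOrderIso : ULift.{u} ℕ ≃o ℕ where
  toFun := ULift.down
  invFun := ULift.up
  left_inv := fun _ => rfl
  right_inv := fun _ => rfl
  map_rel_iff' := Iff.rfl

lemma eval_cont {X : Type*} [MetricSpace X] (y : X) :
    Continuous (fun f : X ≃ᵢ X => f y) :=
  (continuous_apply y).comp continuous_induced_dom

lemma divergentNet_of_divergentSeq {X : Type*} [MetricSpace X] [Nonempty X]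
    [TopologicalSpace.SeparableSpace X] {g : ℕ → X ≃ᵢ X}
    (hdiv : DivergentSeq g) : DivergentNet g := by
  intro h hcl
  set d := TopologicalSpace.denseSeq X with hdset
  have hd : DenseRange d := TopologicalSpace.denseRange_denseSeq X
  have hfreq : ∀ n : ℕ, ∃ᶠ m in atTop, ∀ k ≤ n,
      dist (g m (d k)) (h (d k)) < 1/(n+1) := by
    intro n
    have hopen : IsOpen {f : X ≃ᵢ X | ∀ k ≤ n, dist (f (d k)) (h (d k)) < 1/(n+1)} := by
      have : {f : X ≃ᵢ X | ∀ k ≤ n, dist (f (d k)) (h (d k)) < 1/(n+1)} =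
          ⋂ k ∈ Finset.range (n+1),
            (fun f : X ≃ᵢ X => dist (f (d k)) (h (d k))) ⁻¹' Set.Iio (1/(n+1)) := by
        ext f
        simp [Nat.lt_succ_iff]
      rw [this]
      exact isOpen_biInter_finset fun k _ =>
        (isOpen_Iio).preimage (((eval_cont (d k)).dist continuous_const))
    have hmem : h ∈ {f : X ≃ᵢ X | ∀ k ≤ n, dist (f (d k)) (h (d k)) < 1/(n+1)} := by
      intro k _
      simp only [dist_self]
      positivity
    exact (mapClusterPt_iff_frequently.mp hcl) _ (hopen.mem_nhds hmem)
  have key : ∀ n N : ℕ, ∃ m, N ≤ m ∧ ∀ k ≤ n, dist (g m (d k)) (h (d k)) < 1/(n+1) := by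
    intro n N
    obtain ⟨m, hm, hm2⟩ := frequently_atTop.mp (hfreq n) N
    exact ⟨m, hm, hm2⟩
  choose f hf1 hf2 using key
  set φ : ℕ → ℕ := fun n => Nat.rec (f 0 0) (fun n ih => f (n+1) (ih+1)) n with hφ
  have hφs : StrictMono φ := by
    apply strictMono_nat_of_lt_succ
    intro n
    have : φ n + 1 ≤ φ (n+1) := hf1 (n+1) (φ n + 1)
    omega
  have hφ2 : ∀ n, ∀ k ≤ n, dist (g (φ n) (d k)) (h (d k)) < 1/(n+1) := by
    intro n
    cases n with
    | zero => exact hf2 0 0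
    | succ m => exact hf2 (m+1) (φ m + 1)
  apply hdiv φ hφs h
  rw [show (𝓝 h) = _ from nhds_induced (fun g : X ≃ᵢ X => (g : X → X)) h,
    tendsto_comap_iff]
  rw [tendsto_pi_nhds]
  intro y
  rw [Metric.tendsto_atTop]
  intro ε hε
  obtain ⟨k, hk⟩ := hd.exists_dist_lt y (by positivity : (0:ℝ) < ε/4)
  obtain ⟨M, hM⟩ := exists_nat_gt (2/ε)
  refine ⟨max k M, fun n hn => ?_⟩
  have hkn : k ≤ n := le_trans (le_max_left _ _) hn
  have hMn : M ≤ n := le_trans (le_max_right _ _) hn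
  have h1 : dist (g (φ n) (d k)) (h (d k)) < 1/(n+1) := hφ2 n k hkn
  have h2 : (1:ℝ)/(n+1) < ε/2 := by
    rw [div_lt_div_iff₀ (by positivity) (by positivity)]
    have : (2:ℝ)/ε < n + 1 := lt_of_lt_of_le hM (by exact_mod_cast Nat.le_succ_of_le hMn)
    rw [div_lt_iff₀ hε] at this
    linarith
  have h3 : dist (g (φ n) y) (g (φ n) (d k)) = dist y (d k) :=
    (g (φ n)).isometry.dist_eq y (d k)
  have h4 : dist (h (d k)) (h y) = dist (d k) y := h.isometry.dist_eq (d k) y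
  calc dist ((g ∘ φ) n y) (h y)
      ≤ dist (g (φ n) y) (g (φ n) (d k)) + dist (g (φ n) (d k)) (h (d k))
        + dist (h (d k)) (h y) := dist_triangle4 _ _ _ _
    _ < ε/4 + ε/2 + ε/4 := by
        rw [h3, h4, dist_comm (d k) y]
        have := lt_trans h1 h2
        linarith
    _ = ε := by ring

/-- Lemma 5.5: for a divergent sequence of isometries of a separable metric space with
Cauchy-indivisible evaluation action such that `(g_n x)` is Cauchy for some `x`:
(i) `(g_n x_n)` is Cauchy for every Cauchy sequence `(x_n)`;
(ii) `ĝ_n [x_k] → [g_k x_k]` in `X̂` for every Cauchy sequence `(x_k)`. -/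
theorem cauchySeq_apply_and_hat_tendsto (X : Type*) [MetricSpace X]
    [TopologicalSpace.SeparableSpace X] (hCI : IsoCauchyIndivisible X)
    (g : ℕ → X ≃ᵢ X) (hdiv : DivergentSeq g) (x : X)
    (hx : CauchySeq fun n => g n x) :
    (∀ xs : ℕ → X, CauchySeq xs → CauchySeq fun n => g n (xs n)) ∧
    (∀ xs : ℕ → X, CauchySeq xs → ∀ ξ η : Completion X,
      Tendsto (fun k => ((xs k : X) : Completion X)) atTop (𝓝 ξ) →
      Tendsto (fun k => ((g k (xs k) : X) : Completion X)) atTop (𝓝 η) →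
      Tendsto (fun n => hatIso (g n) ξ) atTop (𝓝 η)) := by
  have : Nonempty X := ⟨x⟩
  have hnet : DivergentNet g := divergentNet_of_divergentSeq hdiv
  have hmap : map (ULift.down : ULift ℕ → ℕ) atTop = atTop :=
    uliftNatOrderIso.map_atTop
  have hnet' : DivergentNet (fun i : ULift ℕ => g i.down) := by
    intro h hcl
    apply hnet h
    have : map (fun i : ULift ℕ => g i.down) atTop = map g atTop := by
      rw [← hmap, Filter.map_map]; rfl
    unfold MapClusterPt at hcl ⊢
    rwa [this] at hcl
  have hmapy : ∀ y : X, map (fun i : ULift ℕ => g i.down y) atTop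
      = map (fun n => g n y) atTop := by
    intro y
    rw [← hmap, Filter.map_map]; rfl
  have hall : ∀ y : X, CauchySeq (fun n => g n y) := by
    intro y
    have hx' : Cauchy (map (fun i : ULift ℕ => g i.down x) atTop) := by
      rw [hmapy x]; exact hx
    have := hCI (ULift ℕ) (fun i => g i.down) hnet' ⟨x, hx'⟩ y
    rwa [hmapy y] at this
  have part1 : ∀ xs : ℕ → X, CauchySeq xs → CauchySeq fun n => g n (xs n) := by
    intro xs hxs
    rw [Metric.cauchySeq_iff]
    intro ε hε
    obtain ⟨N1, hN1⟩ := Metric.cauchySeq_iff.mp hxs (ε/3) (by positivity)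
    obtain ⟨N2, hN2⟩ := Metric.cauchySeq_iff.mp (hall (xs N1)) (ε/3) (by positivity)
    refine ⟨max N1 N2, fun m hm n hn => ?_⟩
    have hm1 := le_trans (le_max_left _ _) hm
    have hm2 := le_trans (le_max_right _ _) hm
    have hn1 := le_trans (le_max_left _ _) hn
    have hn2 := le_trans (le_max_right _ _) hn
    have e1 : dist (g m (xs m)) (g m (xs N1)) = dist (xs m) (xs N1) :=
      (g m).isometry.dist_eq _ _
    have e2 : dist (g n (xs N1)) (g n (xs n)) = dist (xs N1) (xs n) :=
      (g n).isometry.dist_eq _ _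
    calc dist (g m (xs m)) (g n (xs n))
        ≤ dist (g m (xs m)) (g m (xs N1)) + dist (g m (xs N1)) (g n (xs N1))
          + dist (g n (xs N1)) (g n (xs n)) := dist_triangle4 _ _ _ _
      _ < ε/3 + ε/3 + ε/3 := by
          rw [e1, e2]
          have t1 := hN1 m hm1 N1 le_rfl
          have t2 := hN2 m hm2 n hn2
          have t3 := hN1 N1 le_rfl n hn1
          linarith
      _ = ε := by ring
  refine ⟨part1, ?_⟩
  intro xs hxs ξ η hξ hη
  have hiso : ∀ n, Isometry (hatIso (g n)) := fun n =>
    (g n).isometry.completion_map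
  have hcoe : ∀ n (a : X), hatIso (g n) (a : Completion X) = ((g n a : X) : Completion X) :=
    fun n a => Completion.map_coe (g n).isometry.uniformContinuous a
  rw [Metric.tendsto_atTop]
  intro ε hε
  rw [Metric.tendsto_atTop] at hξ hη
  obtain ⟨K1, hK1⟩ := hξ (ε/3) (by positivity)
  obtain ⟨K2, hK2⟩ := Metric.cauchySeq_iff.mp hxs (ε/3) (by positivity)
  obtain ⟨K3, hK3⟩ := hη (ε/3) (by positivity)
  set k := max K1 K2
  refine ⟨max k K3, fun n hn => ?_⟩
  have hnk : k ≤ n := le_trans (le_max_left _ _) hn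
  have hn3 : K3 ≤ n := le_trans (le_max_right _ _) hn
  have e1 : dist (hatIso (g n) ξ) (hatIso (g n) ((xs k : X) : Completion X))
      = dist ξ ((xs k : X) : Completion X) := (hiso n).dist_eq _ _
  have e2 : dist (hatIso (g n) ((xs k : X) : Completion X))
      (((g n (xs n) : X) : Completion X)) = dist (xs k) (xs n) := by
    rw [hcoe n (xs k), Completion.dist_eq, (g n).isometry.dist_eq]
  calc dist (hatIso (g n) ξ) η
      ≤ dist (hatIso (g n) ξ) (hatIso (g n) ((xs k : X) : Completion X))
        + dist (hatIso (g n) ((xs k : X) : Completion X)) (((g n (xs n) : X) : Completion X))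
        + dist (((g n (xs n) : X) : Completion X)) η := dist_triangle4 _ _ _ _
    _ < ε/3 + ε/3 + ε/3 := by
        rw [e1, e2]
        have t1 : dist ξ ((xs k : X) : Completion X) < ε/3 := by
          rw [dist_comm]; exact hK1 k (le_max_left _ _)
        have t2 := hK2 k (le_max_right _ _) n (le_trans (le_max_right _ _) hnk)
        have t3 := hK3 n hn3
        linarith
    _ = ε := by ring


end
end
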